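/- arXiv:2503.11779 — 6 statements merged into one kernel-verified Lean document; each statement's English description precedes it below -/
import Mathlib

section
/- For any real numbers a < b and ε > 0, there exist no C² functions L, M, N : (a,b)×(−ε,ε) → ℝ satisfying on the whole domain the Gauss equation L·N − M² = 0 and the Codazzi equations ∂₂L = ∂₁M and ∂₂M = ∂₁N, together with the initial data L(x₁,0) = 0, M(x₁,0) = 0 and N(x₁,0) = x₁ for every x₁ ∈ (a,b). -/
/-- The standard basis of ℝ² (as pairs). -/
noncomputable def E2 : Fin 2 → ℝ × ℝ := ![(1, 0), (0, 1)]

/-- The `i`-th partial derivative of a scalar function on ℝ². -/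
noncomputable def sp (i : Fin 2) (f : ℝ × ℝ → ℝ) (z : ℝ × ℝ) : ℝ :=
  fderiv ℝ f z (E2 i)

private lemma E2_zero : E2 0 = ((1 : ℝ), (0 : ℝ)) := rfl
private lemma E2_one : E2 1 = ((0 : ℝ), (1 : ℝ)) := rfl

/-- Vertical derivative via chain rule. -/
private lemma vertHasDerivAt {f : ℝ × ℝ → ℝ} {x t : ℝ}
    (hf : DifferentiableAt ℝ f (x, t)) :
    HasDerivAt (fun s => f (x, s)) (sp 1 f (x, t)) t := by
  have hc : HasDerivAt (fun s : ℝ => ((x : ℝ), s)) (((0 : ℝ), (1 : ℝ))) t :=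
    (hasDerivAt_const t x).prodMk (hasDerivAt_id t)
  have h := hf.hasFDerivAt.comp_hasDerivAt t hc
  simpa [sp, E2_one, Function.comp_def] using h

/-- Horizontal derivative via chain rule. -/
private lemma horizHasDerivAt {f : ℝ × ℝ → ℝ} {x t : ℝ}
    (hf : DifferentiableAt ℝ f (x, t)) :
    HasDerivAt (fun s => f (s, t)) (sp 0 f (x, t)) x := by
  have hc : HasDerivAt (fun s : ℝ => (s, (t : ℝ))) (((1 : ℝ), (0 : ℝ))) x :=
    (hasDerivAt_id x).prodMk (hasDerivAt_const x t)
  have h := hf.hasFDerivAt.comp_hasDerivAt x hc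
  simpa [sp, E2_zero, Function.comp_def] using h

/-- there are no C² solutions `L, M, N` on `(a,b)×(−ε,ε)` of the
Gauss–Codazzi system `LN − M² = 0`, `∂₂L = ∂₁M`, `∂₂M = ∂₁N` with initial data
`L(x₁,0) = 0`, `M(x₁,0) = 0`, `N(x₁,0) = x₁`. -/
theorem stmt3 (a b ε : ℝ) (hab : a < b) (hε : 0 < ε)
    (L M N : ℝ × ℝ → ℝ)
    (hL : ContDiffOn ℝ 2 L (Set.Ioo a b ×ˢ Set.Ioo (-ε) ε))
    (hM : ContDiffOn ℝ 2 M (Set.Ioo a b ×ˢ Set.Ioo (-ε) ε))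
    (hN : ContDiffOn ℝ 2 N (Set.Ioo a b ×ˢ Set.Ioo (-ε) ε))
    (hGauss : ∀ z ∈ Set.Ioo a b ×ˢ Set.Ioo (-ε) ε, L z * N z - M z ^ 2 = 0)
    (hCod1 : ∀ z ∈ Set.Ioo a b ×ˢ Set.Ioo (-ε) ε, sp 1 L z = sp 0 M z)
    (hCod2 : ∀ z ∈ Set.Ioo a b ×ˢ Set.Ioo (-ε) ε, sp 1 M z = sp 0 N z)
    (hinit : ∀ x ∈ Set.Ioo a b, L (x, 0) = 0 ∧ M (x, 0) = 0 ∧ N (x, 0) = x) :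
    False := by
  set U : Set (ℝ × ℝ) := Set.Ioo a b ×ˢ Set.Ioo (-ε) ε with hUdef
  have hUo : IsOpen U := isOpen_Ioo.prod isOpen_Ioo
  set x₀ : ℝ := (a + b) / 2 with hx₀def
  have hx₀ : x₀ ∈ Set.Ioo a b := ⟨by simp only [hx₀def]; linarith, by simp only [hx₀def]; linarith⟩
  have h0ε : (0 : ℝ) ∈ Set.Ioo (-ε) ε := ⟨by linarith, hε⟩
  have hz₀ : ((x₀, (0 : ℝ)) : ℝ × ℝ) ∈ U := ⟨hx₀, h0ε⟩
  -- basic differentiability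
  have cAt : ∀ {f : ℝ × ℝ → ℝ}, ContDiffOn ℝ 2 f U → ∀ {z : ℝ × ℝ}, z ∈ U →
      ContDiffAt ℝ 2 f z := fun {_} hf {_} hz => hf.contDiffAt (hUo.mem_nhds hz)
  have dAt : ∀ {f : ℝ × ℝ → ℝ}, ContDiffOn ℝ 2 f U → ∀ {z : ℝ × ℝ}, z ∈ U →
      DifferentiableAt ℝ f z := fun {_} hf {_} hz => (cAt hf hz).differentiableAt two_ne_zero
  have dFderiv : ∀ {f : ℝ × ℝ → ℝ}, ContDiffOn ℝ 2 f U → ∀ {z : ℝ × ℝ}, z ∈ U →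
      DifferentiableAt ℝ (fderiv ℝ f) z := by
    intro f hf z hz
    exact ((cAt hf hz).fderiv_right (m := 1) (by norm_num)).differentiableAt one_ne_zero
  have dSp : ∀ {f : ℝ × ℝ → ℝ}, ContDiffOn ℝ 2 f U → ∀ (i : Fin 2) {z : ℝ × ℝ}, z ∈ U →
      DifferentiableAt ℝ (sp i f) z := by
    intro f hf i z hz
    exact (dFderiv hf hz).clm_apply (differentiableAt_const _)
  -- F1 : sp 0 M = 0 on the line
  have F1 : ∀ x ∈ Set.Ioo a b, sp 0 M (x, 0) = 0 := by
    intro x hx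
    have hmem : (x, (0 : ℝ)) ∈ U := ⟨hx, h0ε⟩
    have h1 : HasDerivAt (fun s => M (s, 0)) (sp 0 M (x, 0)) x :=
      horizHasDerivAt (dAt hM hmem)
    have h2 : HasDerivAt (fun s => M (s, 0)) 0 x := by
      have heq : (fun s => M (s, 0)) =ᶠ[nhds x] (fun _ => (0 : ℝ)) := by
        filter_upwards [isOpen_Ioo.mem_nhds hx] with y hy
        exact (hinit y hy).2.1
      exact (hasDerivAt_const x (0 : ℝ)).congr_of_eventuallyEq heq
    exact h1.unique h2
  -- F2 : sp 0 N = 1 on the line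
  have F2 : ∀ x ∈ Set.Ioo a b, sp 0 N (x, 0) = 1 := by
    intro x hx
    have hmem : (x, (0 : ℝ)) ∈ U := ⟨hx, h0ε⟩
    have h1 : HasDerivAt (fun s => N (s, 0)) (sp 0 N (x, 0)) x :=
      horizHasDerivAt (dAt hN hmem)
    have h2 : HasDerivAt (fun s => N (s, 0)) 1 x := by
      have heq : (fun s => N (s, 0)) =ᶠ[nhds x] (fun s => s) := by
        filter_upwards [isOpen_Ioo.mem_nhds hx] with y hy
        exact (hinit y hy).2.2
      exact (hasDerivAt_id x).congr_of_eventuallyEq heq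
    exact h1.unique h2
  -- F4 : sp 0 (sp 1 M) (x₀, 0) = 0
  have F4 : sp 0 (sp 1 M) (x₀, 0) = 0 := by
    have h1 : HasDerivAt (fun s => sp 1 M (s, 0)) (sp 0 (sp 1 M) (x₀, 0)) x₀ :=
      horizHasDerivAt (dSp hM 1 hz₀)
    have h2 : HasDerivAt (fun s => sp 1 M (s, 0)) 0 x₀ := by
      have heq : (fun s => sp 1 M (s, 0)) =ᶠ[nhds x₀] (fun _ => (1 : ℝ)) := by
        filter_upwards [isOpen_Ioo.mem_nhds hx₀] with y hy
        rw [hCod2 (y, 0) ⟨hy, h0ε⟩, F2 y hy]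
      exact (hasDerivAt_const x₀ (1 : ℝ)).congr_of_eventuallyEq heq
    exact h1.unique h2
  -- symmetry of second derivative of M : sp 1 (sp 0 M) (x₀,0) = sp 0 (sp 1 M) (x₀,0)
  have spFormula : ∀ {f : ℝ × ℝ → ℝ}, ContDiffOn ℝ 2 f U → ∀ (i j : Fin 2),
      sp j (sp i f) (x₀, 0) = fderiv ℝ (fderiv ℝ f) (x₀, 0) (E2 j) (E2 i) := by
    intro f hf i j
    have h := fderiv_clm_apply (dFderiv hf hz₀) (differentiableAt_const (E2 i))
    have : sp j (sp i f) (x₀, 0) = fderiv ℝ (fun z => fderiv ℝ f z (E2 i)) (x₀, 0) (E2 j) := rfl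
    rw [this, h]
    simp
  have Fsym : sp 1 (sp 0 M) (x₀, 0) = sp 0 (sp 1 M) (x₀, 0) := by
    have hsym : IsSymmSndFDerivAt ℝ M (x₀, 0) :=
      (cAt hM hz₀).isSymmSndFDerivAt (by simp)
    rw [spFormula hM 0 1, spFormula hM 1 0]
    exact hsym.eq (E2 1) (E2 0)
  have F5 : sp 1 (sp 0 M) (x₀, 0) = 0 := Fsym.trans F4
  -- First vertical derivative of Gauss relation, rewritten via Codazzi:
  have G0 : ∀ t ∈ Set.Ioo (-ε) ε,
      sp 0 M (x₀, t) * N (x₀, t) + L (x₀, t) * sp 1 N (x₀, t)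
        - 2 * (M (x₀, t) * sp 0 N (x₀, t)) = 0 := by
    intro t ht
    have hmem : ((x₀, t) : ℝ × ℝ) ∈ U := ⟨hx₀, ht⟩
    have hLd := vertHasDerivAt (dAt hL hmem)
    have hMd := vertHasDerivAt (dAt hM hmem)
    have hNd := vertHasDerivAt (dAt hN hmem)
    have h1 : HasDerivAt (fun s => L (x₀, s) * N (x₀, s) - M (x₀, s) ^ 2)
        (sp 1 L (x₀, t) * N (x₀, t) + L (x₀, t) * sp 1 N (x₀, t)
          - 2 * (M (x₀, t) * sp 1 M (x₀, t))) t := by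
      have := (hLd.fun_mul hNd).fun_sub (hMd.fun_pow 2)
      convert this using 1
      · rfl
      · rfl
      · norm_num [mul_assoc]
    have h2 : HasDerivAt (fun s => L (x₀, s) * N (x₀, s) - M (x₀, s) ^ 2) 0 t := by
      have heq : (fun s => L (x₀, s) * N (x₀, s) - M (x₀, s) ^ 2) =ᶠ[nhds t]
          (fun _ => (0 : ℝ)) := by
        filter_upwards [isOpen_Ioo.mem_nhds ht] with s hs
        exact hGauss (x₀, s) ⟨hx₀, hs⟩
      exact (hasDerivAt_const t (0 : ℝ)).congr_of_eventuallyEq heq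
    have key := h1.unique h2
    rw [hCod1 (x₀, t) hmem, hCod2 (x₀, t) hmem] at key
    exact key
  -- Differentiate G0 vertically at t = 0
  have hG1 : HasDerivAt
      (fun s => sp 0 M (x₀, s) * N (x₀, s) + L (x₀, s) * sp 1 N (x₀, s)
        - 2 * (M (x₀, s) * sp 0 N (x₀, s)))
      (sp 1 (sp 0 M) (x₀, 0) * N (x₀, 0) + sp 0 M (x₀, 0) * sp 1 N (x₀, 0)
        + (sp 1 L (x₀, 0) * sp 1 N (x₀, 0) + L (x₀, 0) * sp 1 (sp 1 N) (x₀, 0))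
        - 2 * (sp 1 M (x₀, 0) * sp 0 N (x₀, 0) + M (x₀, 0) * sp 1 (sp 0 N) (x₀, 0))) 0 := by
    have h1 := (vertHasDerivAt (dSp hM 0 hz₀)).mul (vertHasDerivAt (dAt hN hz₀))
    have h2 := (vertHasDerivAt (dAt hL hz₀)).mul (vertHasDerivAt (dSp hN 1 hz₀))
    have h3 := (vertHasDerivAt (dAt hM hz₀)).mul (vertHasDerivAt (dSp hN 0 hz₀))
    exact (h1.add h2).sub ((h3.const_mul 2))
  have hG2 : HasDerivAt
      (fun s => sp 0 M (x₀, s) * N (x₀, s) + L (x₀, s) * sp 1 N (x₀, s)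
        - 2 * (M (x₀, s) * sp 0 N (x₀, s))) 0 0 := by
    have heq : (fun s => sp 0 M (x₀, s) * N (x₀, s) + L (x₀, s) * sp 1 N (x₀, s)
        - 2 * (M (x₀, s) * sp 0 N (x₀, s))) =ᶠ[nhds (0 : ℝ)] (fun _ => (0 : ℝ)) := by
      filter_upwards [isOpen_Ioo.mem_nhds h0ε] with s hs
      exact G0 s hs
    exact (hasDerivAt_const (0 : ℝ) (0 : ℝ)).congr_of_eventuallyEq heq
  have key := hG1.unique hG2
  -- evaluate everything at (x₀, 0)
  obtain ⟨hL0, hM0, hN0⟩ := hinit x₀ hx₀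
  have e1 : sp 0 M (x₀, 0) = 0 := F1 x₀ hx₀
  have e2 : sp 0 N (x₀, 0) = 1 := F2 x₀ hx₀
  have e3 : sp 1 L (x₀, 0) = 0 := by rw [hCod1 (x₀, 0) hz₀]; exact e1
  have e4 : sp 1 M (x₀, 0) = 1 := by rw [hCod2 (x₀, 0) hz₀]; exact e2
  rw [F5, e1, e2, e3, e4, hL0, hM0] at key
  norm_num at key
end

section
/- Let c₂ ≥ c₁ > 0 and c₀ > 0. Let Q : Sym₂(ℝ) → ℝ be a quadratic form with c₁‖M‖² ≤ Q(M) ≤ c₂‖M‖² for all M ∈ Sym₂(ℝ), let α⁺, α⁻ ≥ c₀, and let A ∈ Sym₂(ℝ) have eigenvalues κ₁, κ₂ with |κ₁| ≤ |κ₂|. Define f(M) = Q(M − A) + α⁺·max(det M, 0) + α⁻·max(−det M, 0). Then f attains its minimum over Sym₂(ℝ), and there exists a constant c > 0 depending only on c₁, c₂, c₀ (in particular not on A, α⁺, α⁻) such that c·κ₁² ≤ min_{M ∈ Sym₂(ℝ)} f(M) ≤ c₂·κ₁². -/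
open Matrix

/-- The Frobenius norm of a real 2×2 matrix. -/
noncomputable def frob2 (A : Matrix (Fin 2) (Fin 2) ℝ) : ℝ :=
  Real.sqrt (∑ i, ∑ j, A i j ^ 2)

lemma frob2_sq (X : Matrix (Fin 2) (Fin 2) ℝ) :
    frob2 X ^ 2 = X 0 0 ^ 2 + X 0 1 ^ 2 + X 1 0 ^ 2 + X 1 1 ^ 2 := by
  unfold frob2
  rw [Real.sq_sqrt (by positivity)]
  simp [Fin.sum_univ_two]; ring

lemma aux1 (p q r κ₁ κ₂ : ℝ) (hp : p + r = κ₁ + κ₂) (hd : p * r - q ^ 2 = κ₁ * κ₂)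
    (hk : |κ₁| ≤ |κ₂|) : κ₁ ^ 2 ≤ p ^ 2 + q ^ 2 := by
  have h2 : κ₁ ^ 2 ≤ κ₂ ^ 2 := by
    rw [← sq_abs κ₁, ← sq_abs κ₂]
    exact pow_le_pow_left₀ (abs_nonneg _) hk 2
  have hI : (p - κ₁) * (κ₂ - κ₁) = (p - κ₁) ^ 2 + q ^ 2 := by
    linear_combination (-p) * hp + hd
  have hG : p ^ 2 + q ^ 2 - κ₁ ^ 2 = (p - κ₁) * (κ₁ + κ₂) := by
    linear_combination p * hp - hd
  rcases eq_or_ne κ₂ κ₁ with he | hne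
  · subst he
    nlinarith [sq_nonneg (p - κ₂), sq_nonneg q, hI, hG]
  · have h3 : (p ^ 2 + q ^ 2 - κ₁ ^ 2) * (κ₂ - κ₁) ^ 2
        = ((p - κ₁) ^ 2 + q ^ 2) * (κ₂ ^ 2 - κ₁ ^ 2) := by
      linear_combination ((κ₂ - κ₁) ^ 2) * hG + (κ₂ ^ 2 - κ₁ ^ 2) * hI
    have h4 : 0 < (κ₂ - κ₁) ^ 2 := by
      have := sub_ne_zero.mpr hne; positivity
    nlinarith [mul_nonneg (by positivity : (0:ℝ) ≤ (p - κ₁) ^ 2 + q ^ 2)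
      (by linarith : (0:ℝ) ≤ κ₂ ^ 2 - κ₁ ^ 2)]

lemma L0 (μ₁ μ₂ p q r κ₁ κ₂ : ℝ) (hp : p + r = κ₁ + κ₂) (hd : p * r - q ^ 2 = κ₁ * κ₂)
    (hk : |κ₁| ≤ |κ₂|) :
    κ₁ ^ 2 / 16 ≤ (μ₁ - p) ^ 2 + 2 * q ^ 2 + (μ₂ - r) ^ 2 + |μ₁ * μ₂| := by
  have ha1 : κ₁ ^ 2 ≤ p ^ 2 + q ^ 2 := aux1 p q r κ₁ κ₂ hp hd hk
  have ha2 : κ₁ ^ 2 ≤ r ^ 2 + q ^ 2 := aux1 r q p κ₁ κ₂ (by linarith) (by linarith) hk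
  rcases le_or_gt (κ₁ ^ 2 / 16) ((μ₁ - p) ^ 2 + 2 * q ^ 2 + (μ₂ - r) ^ 2) with h | h
  · linarith [abs_nonneg (μ₁ * μ₂)]
  · have hb1 : (μ₁ - p) ^ 2 + q ^ 2 ≤ κ₁ ^ 2 / 16 := by nlinarith [sq_nonneg (μ₂ - r), sq_nonneg q]
    have hb2 : (μ₂ - r) ^ 2 + q ^ 2 ≤ κ₁ ^ 2 / 16 := by nlinarith [sq_nonneg (μ₁ - p), sq_nonneg q]
    have hm1 : 7 / 16 * κ₁ ^ 2 ≤ μ₁ ^ 2 := by nlinarith [sq_nonneg (p + 2 * (μ₁ - p))]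
    have hm2 : 7 / 16 * κ₁ ^ 2 ≤ μ₂ ^ 2 := by nlinarith [sq_nonneg (r + 2 * (μ₂ - r))]
    have habs : κ₁ ^ 2 / 16 ≤ |μ₁ * μ₂| := by
      nlinarith [abs_nonneg (μ₁ * μ₂), sq_abs (μ₁ * μ₂), sq_nonneg κ₁,
        mul_le_mul hm1 hm2 (by positivity) (sq_nonneg μ₁)]
    nlinarith [sq_nonneg (μ₁ - p), sq_nonneg (μ₂ - r), sq_nonneg q]

lemma rot2 (a b d : ℝ) :
    ∃ c s : ℝ, c ^ 2 + s ^ 2 = 1 ∧ b * (c ^ 2 - s ^ 2) + (d - a) * (c * s) = 0 := by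
  by_cases hb : b = 0
  · exact ⟨1, 0, by norm_num, by simp [hb]⟩
  · set w := Real.sqrt ((a - d) ^ 2 + 4 * b ^ 2) with hw
    have hw2 : w ^ 2 = (a - d) ^ 2 + 4 * b ^ 2 := Real.sq_sqrt (by positivity)
    set e := (d - a + w) / 2 with he
    have hn2 : 0 < b ^ 2 + e ^ 2 := by positivity
    set n := Real.sqrt (b ^ 2 + e ^ 2) with hn
    have hnn : n ^ 2 = b ^ 2 + e ^ 2 := Real.sq_sqrt (by positivity)
    have hnpos : 0 < n := Real.sqrt_pos.mpr hn2
    have hne : n ≠ 0 := ne_of_gt hnpos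
    have hkey : b ^ 2 = e * (e - (d - a)) := by
      rw [he]; linear_combination (-1/4 : ℝ) * hw2
    refine ⟨b / n, e / n, ?_, ?_⟩
    · have h : (b/n) ^ 2 + (e/n) ^ 2 = (b ^ 2 + e ^ 2) / n ^ 2 := by ring
      rw [h, ← hnn, div_self (by positivity)]
    · have hnum : b * (b ^ 2 - e ^ 2) + (d - a) * (b * e) = 0 := by
        linear_combination b * hkey
      have h : b * ((b/n) ^ 2 - (e/n) ^ 2) + (d - a) * (b/n * (e/n))
          = (b * (b ^ 2 - e ^ 2) + (d - a) * (b * e)) / n ^ 2 := by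
        field_simp
      rw [h, hnum, zero_div]

lemma keyL (a b d p q r κ₁ κ₂ : ℝ) (hp : p + r = κ₁ + κ₂) (hd : p * r - q ^ 2 = κ₁ * κ₂)
    (hk : |κ₁| ≤ |κ₂|) :
    κ₁ ^ 2 / 16 ≤ (a - p) ^ 2 + 2 * (b - q) ^ 2 + (d - r) ^ 2 + |a * d - b ^ 2| := by
  obtain ⟨c, s, h1, h2⟩ := rot2 a b d
  set a' := c ^ 2 * a + 2 * (c * s) * b + s ^ 2 * d with ha'
  set d' := s ^ 2 * a - 2 * (c * s) * b + c ^ 2 * d with hd'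
  set p' := c ^ 2 * p + 2 * (c * s) * q + s ^ 2 * r with hp'
  set q' := (c ^ 2 - s ^ 2) * q + (c * s) * (r - p) with hq'
  set r' := s ^ 2 * p - 2 * (c * s) * q + c ^ 2 * r with hr'
  have i1 : p' + r' = κ₁ + κ₂ := by
    rw [hp', hr']; linear_combination (p + r) * h1 + hp
  have i2 : p' * r' - q' ^ 2 = κ₁ * κ₂ := by
    rw [hp', hq', hr']
    linear_combination ((c ^ 2 + s ^ 2 + 1) * (p * r - q ^ 2)) * h1 + hd
  have i3 : a' * d' = a * d - b ^ 2 := by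
    rw [ha', hd']
    linear_combination ((c ^ 2 + s ^ 2 + 1) * (a * d - b ^ 2)) * h1
      + (b * (c ^ 2 - s ^ 2) + (d - a) * (c * s)) * h2
  have i4 : (a' - p') ^ 2 + 2 * q' ^ 2 + (d' - r') ^ 2
      = (a - p) ^ 2 + 2 * (b - q) ^ 2 + (d - r) ^ 2 := by
    rw [ha', hd', hp', hq', hr']
    linear_combination ((c ^ 2 + s ^ 2 + 1) * ((a - p) ^ 2 + 2 * (b - q) ^ 2 + (d - r) ^ 2)) * h1
      + (4 * ((c ^ 2 - s ^ 2) * q + (c * s) * (r - p))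
          - 2 * (b * (c ^ 2 - s ^ 2) + (d - a) * (c * s))) * h2
  have := L0 a' d' p' q' r' κ₁ κ₂ i1 i2 hk
  rw [i3, i4] at this
  exact this

lemma isSymm_mk (x y z : ℝ) : (!![x,y;y,z]).IsSymm := by
  unfold Matrix.IsSymm; ext i j; fin_cases i <;> fin_cases j <;> simp

set_option maxHeartbeats 2000000

/-- the pointwise wide-ribbon energy
`f(M) = Q(M−A) + α⁺ (det M)⁺ + α⁻ (det M)⁻` attains its minimum over symmetric
matrices, and the minimum is comparable to `κ₁²`, with constants depending only on
`c₁, c₂, c₀`. The eigenvalues `κ₁, κ₂` of the symmetric matrix `A` are encoded by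
`κ₁ + κ₂ = tr A`, `κ₁ κ₂ = det A`, `|κ₁| ≤ |κ₂|`. -/
theorem stmt6 (c₁ c₂ c₀ : ℝ) (hc₁ : 0 < c₁) (hc₁₂ : c₁ ≤ c₂) (hc₀ : 0 < c₀) :
    ∃ c : ℝ, 0 < c ∧
      ∀ (Q : Matrix (Fin 2) (Fin 2) ℝ → ℝ)
        (B : Matrix (Fin 2) (Fin 2) ℝ →ₗ[ℝ] Matrix (Fin 2) (Fin 2) ℝ →ₗ[ℝ] ℝ),
        (∀ X Y, B X Y = B Y X) → (∀ X, Q X = B X X) →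
        (∀ M : Matrix (Fin 2) (Fin 2) ℝ, M.IsSymm → c₁ * frob2 M ^ 2 ≤ Q M) →
        (∀ M : Matrix (Fin 2) (Fin 2) ℝ, M.IsSymm → Q M ≤ c₂ * frob2 M ^ 2) →
        ∀ αp αm : ℝ, c₀ ≤ αp → c₀ ≤ αm →
        ∀ A : Matrix (Fin 2) (Fin 2) ℝ, A.IsSymm →
        ∀ κ₁ κ₂ : ℝ, κ₁ + κ₂ = A.trace → κ₁ * κ₂ = A.det → |κ₁| ≤ |κ₂| →
        ∀ f : Matrix (Fin 2) (Fin 2) ℝ → ℝ,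
        (∀ M, f M = Q (M - A) + αp * max M.det 0 + αm * max (-M.det) 0) →
        ∃ M₀ : Matrix (Fin 2) (Fin 2) ℝ, M₀.IsSymm ∧
          (∀ M : Matrix (Fin 2) (Fin 2) ℝ, M.IsSymm → f M₀ ≤ f M) ∧
          c * κ₁ ^ 2 ≤ f M₀ ∧ f M₀ ≤ c₂ * κ₁ ^ 2 := by
  refine ⟨min c₁ c₀ / 16, by positivity, ?_⟩
  intro Q B hBsymm hQB hQl hQu αp αm hαp hαm A hA κ₁ κ₂ htr hdet hk f hf
  set p := A 0 0 with hpdef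
  set q := A 0 1 with hqdef
  set r := A 1 1 with hrdef
  have hA10 : A 1 0 = A 0 1 := hA.apply 0 1
  have hp : p + r = κ₁ + κ₂ := by
    rw [Matrix.trace_fin_two] at htr; linarith
  have hd : p * r - q ^ 2 = κ₁ * κ₂ := by
    rw [Matrix.det_fin_two, hA10] at hdet; linear_combination -hdet
  -- the lower bound, valid for every symmetric M
  have hfge : ∀ M : Matrix (Fin 2) (Fin 2) ℝ, M.IsSymm →
      c₁ * frob2 (M - A) ^ 2 + c₀ * |M.det| ≤ f M := by
    intro M hM
    rw [hf]
    have h1 : c₁ * frob2 (M - A) ^ 2 ≤ Q (M - A) := hQl _ (hM.sub hA)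
    have h2 : c₀ * |M.det| ≤ αp * max M.det 0 + αm * max (-M.det) 0 := by
      rcases le_total 0 M.det with h | h
      · rw [abs_of_nonneg h, max_eq_left h, max_eq_right (by linarith : -M.det ≤ 0)]
        nlinarith [mul_nonneg (by linarith : (0:ℝ) ≤ αp - c₀) h]
      · rw [abs_of_nonpos h, max_eq_right h, max_eq_left (by linarith : (0:ℝ) ≤ -M.det)]
        nlinarith [mul_nonneg (by linarith : (0:ℝ) ≤ αm - c₀) (by linarith : (0:ℝ) ≤ -M.det)]
    linarith
  have lower : ∀ M : Matrix (Fin 2) (Fin 2) ℝ, M.IsSymm →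
      min c₁ c₀ / 16 * κ₁ ^ 2 ≤ f M := by
    intro M hM
    have hM10 : M 1 0 = M 0 1 := hM.apply 0 1
    have hkey := keyL (M 0 0) (M 0 1) (M 1 1) p q r κ₁ κ₂ hp hd hk
    have hE : frob2 (M - A) ^ 2
        = (M 0 0 - p) ^ 2 + 2 * (M 0 1 - q) ^ 2 + (M 1 1 - r) ^ 2 := by
      rw [frob2_sq]
      simp only [Matrix.sub_apply, hM10, hA10, ← hpdef, ← hqdef, ← hrdef]
      ring
    have hdetM : M.det = M 0 0 * M 1 1 - M 0 1 ^ 2 := by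
      rw [Matrix.det_fin_two, hM10]; ring
    have hm := hfge M hM
    rw [hE, hdetM] at hm
    have h0 : (0:ℝ) < min c₁ c₀ := lt_min hc₁ hc₀
    have hEnn : (0:ℝ) ≤ (M 0 0 - p) ^ 2 + 2 * (M 0 1 - q) ^ 2 + (M 1 1 - r) ^ 2 := by positivity
    have habsnn : (0:ℝ) ≤ |M 0 0 * M 1 1 - M 0 1 ^ 2| := abs_nonneg _
    have hmulE := mul_le_mul_of_nonneg_right (min_le_left c₁ c₀) hEnn
    have hmulA := mul_le_mul_of_nonneg_right (min_le_right c₁ c₀) habsnn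
    nlinarith [mul_le_mul_of_nonneg_left hkey (le_of_lt h0)]
  -- a good symmetric candidate Mc with determinant 0 and f Mc ≤ c₂ κ₁²
  have cand : ∃ Mc : Matrix (Fin 2) (Fin 2) ℝ, Mc.IsSymm ∧ f Mc ≤ c₂ * κ₁ ^ 2 := by
    by_cases hκ : κ₁ = κ₂
    · -- then A = κ₁ I
      have h1 : (p - κ₁) ^ 2 + q ^ 2 = 0 := by
        linear_combination p * hp - hd + (κ₁ - p) * hκ
      obtain ⟨h2, h3⟩ := (add_eq_zero_iff_of_nonneg (sq_nonneg _) (sq_nonneg _)).mp h1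
      have hq0 : q = 0 := by
        have := pow_eq_zero_iff (n := 2) (by norm_num) |>.mp h3; exact this
      have hpk : p = κ₁ := by
        have := pow_eq_zero_iff (n := 2) (by norm_num) |>.mp h2; linarith
      have hrk : r = κ₁ := by linarith [hp]
      refine ⟨!![0, 0; 0, κ₂], isSymm_mk 0 0 κ₂, ?_⟩
      have hdet0 : (!![(0:ℝ), 0; 0, κ₂]).det = 0 := by
        simp [Matrix.det_fin_two_of]
      rw [hf, hdet0]
      norm_num
      have hs : (!![(0:ℝ), 0; 0, κ₂] - A).IsSymm := (isSymm_mk 0 0 κ₂).sub hA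
      have hfr : frob2 (!![(0:ℝ), 0; 0, κ₂] - A) ^ 2 = κ₁ ^ 2 := by
        rw [frob2_sq]
        simp only [Matrix.sub_apply, hA10, ← hpdef, ← hqdef, ← hrdef]
        norm_num [hq0, hpk, hrk, ← hκ]
      calc Q (!![(0:ℝ), 0; 0, κ₂] - A) ≤ c₂ * frob2 (!![(0:ℝ), 0; 0, κ₂] - A) ^ 2 := hQu _ hs
        _ = c₂ * κ₁ ^ 2 := by rw [hfr]
    · have hne : κ₁ - κ₂ ≠ 0 := sub_ne_zero.mpr hκ
      set k := κ₂ / (κ₁ - κ₂) with hkdef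
      set x := k * (κ₁ - p) with hx
      set y := -(k * q) with hy
      set z := k * (κ₁ - r) with hz
      have hch : (κ₁ - p) * (κ₁ - r) - q ^ 2 = 0 := by
        linear_combination (-κ₁) * hp + hd
      refine ⟨!![x, y; y, z], isSymm_mk x y z, ?_⟩
      have hdet0 : (!![x, y; y, z]).det = 0 := by
        simp only [Matrix.det_fin_two_of]
        rw [hx, hy, hz]
        linear_combination k ^ 2 * hch
      have hxx : (x - p) * (κ₁ - κ₂) = κ₁ * (κ₂ - p) := by
        rw [hx, hkdef]; field_simp; ring
      have hyy : (y - q) * (κ₁ - κ₂) = -(κ₁ * q) := by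
        rw [hy, hkdef]; field_simp; ring
      have hzz : (z - r) * (κ₁ - κ₂) = κ₁ * (κ₂ - r) := by
        rw [hz, hkdef]; field_simp; ring
      have hbr : (κ₂ - p) ^ 2 + 2 * q ^ 2 + (κ₂ - r) ^ 2 = (κ₁ - κ₂) ^ 2 := by
        linear_combination (p + r - κ₂ + κ₁) * hp - 2 * hd
      have hfr : frob2 (!![x, y; y, z] - A) ^ 2 = κ₁ ^ 2 := by
        rw [frob2_sq]
        simp only [Matrix.sub_apply, hA10, ← hpdef, ← hqdef, ← hrdef]
        have hmain : ((!![x, y; y, z] 0 0 - p) ^ 2 + (!![x, y; y, z] 0 1 - q) ^ 2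
            + (!![x, y; y, z] 1 0 - q) ^ 2 + (!![x, y; y, z] 1 1 - r) ^ 2) * (κ₁ - κ₂) ^ 2
            = κ₁ ^ 2 * (κ₁ - κ₂) ^ 2 := by
          have e00 : !![x, y; y, z] 0 0 = x := by simp
          have e01 : !![x, y; y, z] 0 1 = y := by simp
          have e10 : !![x, y; y, z] 1 0 = y := by simp
          have e11 : !![x, y; y, z] 1 1 = z := by simp
          rw [e00, e01, e10, e11]
          linear_combination ((x - p) * (κ₁ - κ₂) + κ₁ * (κ₂ - p)) * hxx
            + 2 * ((y - q) * (κ₁ - κ₂) - κ₁ * q) * hyy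
            + ((z - r) * (κ₁ - κ₂) + κ₁ * (κ₂ - r)) * hzz
            + κ₁ ^ 2 * hbr
        have h2 : (κ₁ - κ₂) ^ 2 ≠ 0 := pow_ne_zero 2 hne
        exact mul_right_cancel₀ h2 hmain
      rw [hf, hdet0]
      norm_num
      calc Q (!![x, y; y, z] - A) ≤ c₂ * frob2 (!![x, y; y, z] - A) ^ 2 :=
            hQu _ ((isSymm_mk x y z).sub hA)
        _ = c₂ * κ₁ ^ 2 := by rw [hfr]
  obtain ⟨Mc, hMcS, hMcle⟩ := cand
  -- existence of a global minimizer over symmetric matrices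
  set N : ℝ × ℝ × ℝ → Matrix (Fin 2) (Fin 2) ℝ := fun v => !![v.1, v.2.1; v.2.1, v.2.2] with hN
  have hNsymm : ∀ v, (N v).IsSymm := fun v => isSymm_mk _ _ _
  have hNM : ∀ M : Matrix (Fin 2) (Fin 2) ℝ, M.IsSymm → N (M 0 0, M 0 1, M 1 1) = M := by
    intro M hM
    ext i j; fin_cases i <;> fin_cases j <;> simp [hN, hM.apply 0 1]
  have hNdet : ∀ v : ℝ × ℝ × ℝ, (N v).det = v.1 * v.2.2 - v.2.1 * v.2.1 := by
    intro v; simp [hN, Matrix.det_fin_two_of]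
  have hNA : ∀ v : ℝ × ℝ × ℝ, N v - A
      = v.1 • !![(1:ℝ),0;0,0] + v.2.1 • !![(0:ℝ),1;1,0] + v.2.2 • !![(0:ℝ),0;0,1] - A := by
    intro v
    ext i j; fin_cases i <;> fin_cases j <;>
      simp [hN, Matrix.sub_apply, Matrix.add_apply, Matrix.smul_apply]
  have hGcont : Continuous (fun v : ℝ × ℝ × ℝ => f (N v)) := by
    have heq : (fun v : ℝ × ℝ × ℝ => f (N v)) = fun v : ℝ × ℝ × ℝ =>
        B (v.1 • !![(1:ℝ),0;0,0] + v.2.1 • !![(0:ℝ),1;1,0] + v.2.2 • !![(0:ℝ),0;0,1] - A)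
          (v.1 • !![(1:ℝ),0;0,0] + v.2.1 • !![(0:ℝ),1;1,0] + v.2.2 • !![(0:ℝ),0;0,1] - A)
        + αp * max (v.1 * v.2.2 - v.2.1 * v.2.1) 0
        + αm * max (-(v.1 * v.2.2 - v.2.1 * v.2.1)) 0 := by
      funext v
      rw [hf, hQB, hNdet, hNA]
    rw [heq]
    simp only [map_add, map_sub, _root_.map_smul, LinearMap.add_apply, LinearMap.sub_apply,
      LinearMap.smul_apply, smul_eq_mul]
    fun_prop
  have hcoer : ∀ v : ℝ × ℝ × ℝ,
      c₁ * ((v.1 - p) ^ 2 + (v.2.1 - q) ^ 2 + (v.2.2 - r) ^ 2) ≤ f (N v) := by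
    intro v
    have h1 := hfge (N v) (hNsymm v)
    have hE : frob2 (N v - A) ^ 2
        = (v.1 - p) ^ 2 + 2 * (v.2.1 - q) ^ 2 + (v.2.2 - r) ^ 2 := by
      rw [frob2_sq]
      simp only [Matrix.sub_apply, hA10, ← hpdef, ← hqdef, ← hrdef]
      simp [hN]; ring
    rw [hE] at h1
    nlinarith [abs_nonneg ((N v).det), sq_nonneg (v.2.1 - q)]
  -- distance comparison on ℝ × ℝ × ℝ
  have hdist : ∀ v : ℝ × ℝ × ℝ, dist v ((p, q, r) : ℝ × ℝ × ℝ) ^ 2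
      ≤ (v.1 - p) ^ 2 + (v.2.1 - q) ^ 2 + (v.2.2 - r) ^ 2 := by
    intro v
    have h1 : dist v ((p, q, r) : ℝ × ℝ × ℝ)
        = max (dist v.1 p) (max (dist v.2.1 q) (dist v.2.2 r)) := by
      rw [Prod.dist_eq, Prod.dist_eq]
    rw [h1, Real.dist_eq, Real.dist_eq, Real.dist_eq]
    rcases max_cases (|v.1 - p|) (max (|v.2.1 - q|) (|v.2.2 - r|)) with ⟨h2, _⟩ | ⟨h2, _⟩ <;>
      [skip; rcases max_cases (|v.2.1 - q|) (|v.2.2 - r|) with ⟨h3, _⟩ | ⟨h3, _⟩] <;>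
      rw [h2] <;> try rw [h3]
    all_goals nlinarith [sq_abs (v.1 - p), sq_abs (v.2.1 - q), sq_abs (v.2.2 - r),
      sq_nonneg (v.1 - p), sq_nonneg (v.2.1 - q), sq_nonneg (v.2.2 - r)]
  have hfMcnn : c₁ * frob2 (Mc - A) ^ 2 ≤ f Mc := by
    have := hfge Mc hMcS
    nlinarith [abs_nonneg Mc.det]
  have hfMc0 : 0 ≤ f Mc := le_trans (by positivity) hfMcnn
  set R : ℝ := Real.sqrt (f Mc / c₁) + 1 with hR
  have hsq : Real.sqrt (f Mc / c₁) ^ 2 = f Mc / c₁ := Real.sq_sqrt (by positivity)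
  have hsnn : 0 ≤ Real.sqrt (f Mc / c₁) := Real.sqrt_nonneg _
  have hR0 : 0 ≤ R := by rw [hR]; linarith
  obtain ⟨vst, hvK, hvmin⟩ :=
    (isCompact_closedBall ((p, q, r) : ℝ × ℝ × ℝ) R).exists_isMinOn
      ⟨((p, q, r) : ℝ × ℝ × ℝ), Metric.mem_closedBall_self hR0⟩ hGcont.continuousOn
  have hvmin' : ∀ w ∈ Metric.closedBall ((p, q, r) : ℝ × ℝ × ℝ) R, f (N vst) ≤ f (N w) :=
    fun w hw => isMinOn_iff.mp hvmin w hw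
  -- the candidate's coordinates are in the ball
  have hMcK : ((Mc 0 0, Mc 0 1, Mc 1 1) : ℝ × ℝ × ℝ) ∈
      Metric.closedBall ((p, q, r) : ℝ × ℝ × ℝ) R := by
    rw [Metric.mem_closedBall]
    have hMc10 : Mc 1 0 = Mc 0 1 := hMcS.apply 0 1
    have hEc : frob2 (Mc - A) ^ 2
        = (Mc 0 0 - p) ^ 2 + 2 * (Mc 0 1 - q) ^ 2 + (Mc 1 1 - r) ^ 2 := by
      rw [frob2_sq]
      simp only [Matrix.sub_apply, hMc10, hA10, ← hpdef, ← hqdef, ← hrdef]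
      ring
    have h1 := hdist ((Mc 0 0, Mc 0 1, Mc 1 1) : ℝ × ℝ × ℝ)
    simp only at h1
    have hd2 : dist ((Mc 0 0, Mc 0 1, Mc 1 1) : ℝ × ℝ × ℝ) ((p, q, r) : ℝ × ℝ × ℝ) ^ 2
        ≤ frob2 (Mc - A) ^ 2 := by
      rw [hEc]; nlinarith [h1, sq_nonneg (Mc 0 1 - q)]
    have h2 : dist ((Mc 0 0, Mc 0 1, Mc 1 1) : ℝ × ℝ × ℝ) ((p, q, r) : ℝ × ℝ × ℝ) ^ 2
        ≤ f Mc / c₁ := by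
      rw [le_div_iff₀ hc₁]
      nlinarith [mul_le_mul_of_nonneg_right hd2 (le_of_lt hc₁), hfMcnn]
    have hdnn : 0 ≤ dist ((Mc 0 0, Mc 0 1, Mc 1 1) : ℝ × ℝ × ℝ) ((p, q, r) : ℝ × ℝ × ℝ) :=
      dist_nonneg
    rw [hR]
    nlinarith [h2, hsq, hsnn, hdnn,
      sq_nonneg (dist ((Mc 0 0, Mc 0 1, Mc 1 1) : ℝ × ℝ × ℝ) ((p, q, r) : ℝ × ℝ × ℝ)
        - Real.sqrt (f Mc / c₁))]
  have hminMc : f (N vst) ≤ f Mc := by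
    have := hvmin' _ hMcK
    rwa [hNM Mc hMcS] at this
  refine ⟨N vst, hNsymm vst, ?_, lower (N vst) (hNsymm vst), le_trans hminMc hMcle⟩
  intro M hM
  rw [← hNM M hM]
  by_cases hMK : ((M 0 0, M 0 1, M 1 1) : ℝ × ℝ × ℝ) ∈
      Metric.closedBall ((p, q, r) : ℝ × ℝ × ℝ) R
  · exact hvmin' _ hMK
  · have hout : R < dist ((M 0 0, M 0 1, M 1 1) : ℝ × ℝ × ℝ) ((p, q, r) : ℝ × ℝ × ℝ) := by
      simpa [Metric.mem_closedBall, not_le] using hMK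
    have h1 := hcoer ((M 0 0, M 0 1, M 1 1) : ℝ × ℝ × ℝ)
    have h2 := hdist ((M 0 0, M 0 1, M 1 1) : ℝ × ℝ × ℝ)
    simp only at h1 h2
    have hR2 : f Mc ≤ c₁ * R ^ 2 := by
      rw [hR]
      have : f Mc = c₁ * (f Mc / c₁) := by field_simp
      nlinarith [hsq, hsnn, hc₁]
    have h3 : R ^ 2 ≤ dist ((M 0 0, M 0 1, M 1 1) : ℝ × ℝ × ℝ) ((p, q, r) : ℝ × ℝ × ℝ) ^ 2 := by
      nlinarith [hR0, hout]
    have h4 := mul_le_mul_of_nonneg_left (le_trans h3 h2) (le_of_lt hc₁)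
    linarith [h1, hR2, h4]
end

section
/- Let c₂ ≥ c₁ > 0 and c₀ > 0. Let Q : Sym₂(ℝ) → ℝ be a quadratic form with c₁‖M‖² ≤ Q(M) ≤ c₂‖M‖² for all M ∈ Sym₂(ℝ), let α⁺, α⁻ ≥ c₀, and let A ∈ Sym₂(ℝ) have eigenvalues κ₁, κ₂ with |κ₁| ≤ |κ₂|. Define f(M) = Q(M − A) + α⁺·max(det M, 0) + α⁻·max(−det M, 0). Then there exists a constant c > 0 depending only on c₁, c₂, c₀ such that every minimizer M* of f over Sym₂(ℝ) satisfies ‖M* − A‖ ≥ c·|κ₁|. -/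
open Matrix

lemma frob2_nonneg (X : Matrix (Fin 2) (Fin 2) ℝ) : 0 ≤ frob2 X := Real.sqrt_nonneg _

lemma frob2_eq (X : Matrix (Fin 2) (Fin 2) ℝ) :
    frob2 X = Real.sqrt (X 0 0 ^ 2 + X 0 1 ^ 2 + X 1 0 ^ 2 + X 1 1 ^ 2) := by
  rw [frob2]; congr 1; simp [Fin.sum_univ_two]; ring

lemma frob2_mk (a b c d : ℝ) : frob2 !![a, b; c, d] = Real.sqrt (a ^ 2 + b ^ 2 + c ^ 2 + d ^ 2) := by
  rw [frob2_eq]; norm_num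

lemma frob2_sub_comm (X Y : Matrix (Fin 2) (Fin 2) ℝ) : frob2 (X - Y) = frob2 (Y - X) := by
  rw [frob2_eq, frob2_eq]; congr 1; simp [Matrix.sub_apply]; ring

lemma isSymm2 (X : Matrix (Fin 2) (Fin 2) ℝ) (h : X 1 0 = X 0 1) : X.IsSymm := by
  ext i j
  fin_cases i <;> fin_cases j <;> simp [Matrix.transpose_apply, h]

lemma frob2_triangle (X Y : Matrix (Fin 2) (Fin 2) ℝ) :
    frob2 (X + Y) ≤ frob2 X + frob2 Y := by
  set u := frob2 X with hu
  set v := frob2 Y with hv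
  have hu0 : 0 ≤ u := frob2_nonneg X
  have hv0 : 0 ≤ v := frob2_nonneg Y
  have husq := frob2_sq X
  have hvsq := frob2_sq Y
  have hcs : (X 0 0 * Y 0 0 + X 0 1 * Y 0 1 + X 1 0 * Y 1 0 + X 1 1 * Y 1 1) ≤ u * v := by
    have h1 : (X 0 0 * Y 0 0 + X 0 1 * Y 0 1 + X 1 0 * Y 1 0 + X 1 1 * Y 1 1) ^ 2
        ≤ (u * v) ^ 2 := by
      have : (u * v) ^ 2 = (X 0 0 ^ 2 + X 0 1 ^ 2 + X 1 0 ^ 2 + X 1 1 ^ 2) *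
          (Y 0 0 ^ 2 + Y 0 1 ^ 2 + Y 1 0 ^ 2 + Y 1 1 ^ 2) := by
        rw [mul_pow, husq, hvsq]
      rw [this]
      nlinarith [sq_nonneg (X 0 0 * Y 0 1 - X 0 1 * Y 0 0),
        sq_nonneg (X 0 0 * Y 1 0 - X 1 0 * Y 0 0),
        sq_nonneg (X 0 0 * Y 1 1 - X 1 1 * Y 0 0),
        sq_nonneg (X 0 1 * Y 1 0 - X 1 0 * Y 0 1),
        sq_nonneg (X 0 1 * Y 1 1 - X 1 1 * Y 0 1),
        sq_nonneg (X 1 0 * Y 1 1 - X 1 1 * Y 1 0)]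
    exact (abs_le_of_sq_le_sq' h1 (mul_nonneg hu0 hv0)).2
  rw [frob2_eq]
  have : (X + Y) 0 0 ^ 2 + (X + Y) 0 1 ^ 2 + (X + Y) 1 0 ^ 2 + (X + Y) 1 1 ^ 2 ≤ (u + v) ^ 2 := by
    simp only [Matrix.add_apply]
    nlinarith [husq, hvsq, hcs]
  calc Real.sqrt _ ≤ Real.sqrt ((u + v) ^ 2) := Real.sqrt_le_sqrt this
    _ = u + v := Real.sqrt_sq (by linarith)

lemma spectral (S : Matrix (Fin 2) (Fin 2) ℝ) (hS : S.IsSymm) (μ₁ μ₂ : ℝ)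
    (h1 : μ₁ + μ₂ = S.trace) (h2 : μ₁ * μ₂ = S.det) (τ : ℝ) :
    ∃ N : Matrix (Fin 2) (Fin 2) ℝ, N.IsSymm ∧ frob2 N = |τ| ∧
      (S - N).det = (μ₁ - τ) * μ₂ := by
  have hq' : S 1 0 = S 0 1 := hS.apply 0 1
  have htr : μ₁ + μ₂ = S 0 0 + S 1 1 := by rw [h1, Matrix.trace_fin_two]
  have hdet : μ₁ * μ₂ = S 0 0 * S 1 1 - S 0 1 * S 0 1 := by rw [h2, Matrix.det_fin_two, hq']
  set p := S 0 0
  set q := S 0 1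
  set s := S 1 1
  by_cases hμ : μ₁ = μ₂
  · subst hμ
    have h0 : (p - s) ^ 2 + 4 * q ^ 2 = 0 := by
      linear_combination (-(p + s + 2 * μ₁)) * htr + 4 * hdet
    have hps : p = s := by nlinarith [sq_nonneg (p - s), sq_nonneg q]
    have hq0 : q = 0 := by nlinarith [sq_nonneg (p - s), sq_nonneg q]
    have hpμ : p = μ₁ := by rw [hps] at htr ⊢; linarith
    refine ⟨!![τ, 0; 0, 0], isSymm2 _ (by norm_num), ?_, ?_⟩
    · rw [frob2_mk]; norm_num [Real.sqrt_sq_eq_abs]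
    · rw [Matrix.det_fin_two]
      simp [Matrix.sub_apply, hq']
      linear_combination (-1) * hdet + τ * hps + (-τ) * hpμ
  · have hδ : μ₁ - μ₂ ≠ 0 := sub_ne_zero.mpr hμ
    refine ⟨!![τ * (p - μ₂) / (μ₁ - μ₂), τ * q / (μ₁ - μ₂);
        τ * q / (μ₁ - μ₂), τ * (s - μ₂) / (μ₁ - μ₂)],
      isSymm2 _ (by norm_num), ?_, ?_⟩
    · rw [frob2_mk]
      have key : (τ * (p - μ₂) / (μ₁ - μ₂)) ^ 2 + (τ * q / (μ₁ - μ₂)) ^ 2 +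
          (τ * q / (μ₁ - μ₂)) ^ 2 + (τ * (s - μ₂) / (μ₁ - μ₂)) ^ 2 = τ ^ 2 := by
        field_simp
        linear_combination (τ ^ 2 * (-(p + s + μ₁ - μ₂))) * htr + (τ ^ 2 * 2) * hdet
      rw [key, Real.sqrt_sq_eq_abs]
    · rw [Matrix.det_fin_two]
      simp [Matrix.sub_apply, hq']
      field_simp
      linear_combination (-(μ₁ - μ₂ - τ) ^ 2) * hdet + (-(μ₁ - μ₂ - τ) * τ * μ₂) * htr

lemma eig_exists (S : Matrix (Fin 2) (Fin 2) ℝ) (hS : S.IsSymm) :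
    ∃ μ₁ μ₂ : ℝ, μ₁ + μ₂ = S.trace ∧ μ₁ * μ₂ = S.det ∧ |μ₁| ≤ |μ₂| := by
  have hq' : S 1 0 = S 0 1 := hS.apply 0 1
  set p := S 0 0
  set q := S 0 1
  set s := S 1 1
  set D := Real.sqrt ((p - s) ^ 2 + 4 * q ^ 2) with hD
  have hD2 : D ^ 2 = (p - s) ^ 2 + 4 * q ^ 2 := Real.sq_sqrt (by positivity)
  have htr : S.trace = p + s := Matrix.trace_fin_two S
  have hdet : S.det = p * s - q * q := by rw [Matrix.det_fin_two, hq']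
  have hsum : ((p + s - D) / 2) + ((p + s + D) / 2) = S.trace := by rw [htr]; ring
  have hprod : ((p + s - D) / 2) * ((p + s + D) / 2) = S.det := by
    rw [hdet]; nlinarith [hD2]
  rcases le_total |(p + s - D) / 2| |(p + s + D) / 2| with h | h
  · exact ⟨_, _, hsum, hprod, h⟩
  · exact ⟨_, _, by rw [← hsum]; ring, by rw [← hprod]; ring, h⟩

lemma psd_quad (u w z x y : ℝ) (huz : u * z = w ^ 2) (hsum : 0 ≤ u + z) :
    0 ≤ u * x ^ 2 + 2 * w * x * y + z * y ^ 2 := by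
  have hu : 0 ≤ u := by nlinarith [sq_nonneg w]
  have hz : 0 ≤ z := by nlinarith [sq_nonneg w]
  rcases eq_or_lt_of_le hu with hu0 | hu0
  · have hw : w = 0 := by nlinarith [sq_nonneg w]
    rw [hw, ← hu0]; nlinarith [mul_nonneg hz (sq_nonneg y)]
  · have : 0 ≤ (u * x + w * y) ^ 2 + (u * z - w ^ 2) * y ^ 2 := by nlinarith [sq_nonneg (u*x+w*y)]
    nlinarith [sq_nonneg (u * x + w * y)]

lemma psdA (a b d κ₁ κ₂ x y : ℝ) (h1 : κ₁ + κ₂ = a + d) (h2 : κ₁ * κ₂ = a * d - b * b)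
    (h3 : κ₁ ^ 2 ≤ κ₂ ^ 2) :
    κ₁ ^ 2 * (x ^ 2 + y ^ 2) ≤ (a * x + b * y) ^ 2 + (b * x + d * y) ^ 2 := by
  set u := (κ₁ + κ₂) * (a - κ₁) with hu
  set w := (κ₁ + κ₂) * b with hw
  set z := (κ₁ + κ₂) * (d - κ₁) with hz
  have key : (a * x + b * y) ^ 2 + (b * x + d * y) ^ 2 - κ₁ ^ 2 * (x ^ 2 + y ^ 2)
      = u * x ^ 2 + 2 * w * x * y + z * y ^ 2 := by
    rw [hu, hw, hz]
    linear_combination (-(a * x ^ 2 + 2 * b * x * y + d * y ^ 2)) * h1 + (x ^ 2 + y ^ 2) * h2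
  have huz : u * z = w ^ 2 := by
    rw [hu, hw, hz]
    linear_combination ((κ₁ + κ₂) ^ 2 * κ₁) * h1 + (-(κ₁ + κ₂) ^ 2) * h2
  have hsum : 0 ≤ u + z := by
    have h4 : u + z = κ₂ ^ 2 - κ₁ ^ 2 := by rw [hu, hz]; linear_combination (-(κ₁ + κ₂)) * h1
    linarith
  nlinarith [psd_quad u w z x y huz hsum, key]

lemma row_cs (A B x y : ℝ) : (A * x + B * y) ^ 2 ≤ (A ^ 2 + B ^ 2) * (x ^ 2 + y ^ 2) := by
  nlinarith [sq_nonneg (A * y - B * x)]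

set_option maxHeartbeats 1000000 in
lemma eckart (A M : Matrix (Fin 2) (Fin 2) ℝ) (hA : A.IsSymm) (hM : M.IsSymm)
    (κ₁ κ₂ : ℝ) (h1 : κ₁ + κ₂ = A.trace) (h2 : κ₁ * κ₂ = A.det) (h3 : |κ₁| ≤ |κ₂|)
    (hdet : M.det = 0) : |κ₁| ≤ frob2 (M - A) := by
  have hb' : A 1 0 = A 0 1 := hA.apply 0 1
  have hq' : M 1 0 = M 0 1 := hM.apply 0 1
  have htr : κ₁ + κ₂ = A 0 0 + A 1 1 := by rw [h1, Matrix.trace_fin_two]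
  have hdA : κ₁ * κ₂ = A 0 0 * A 1 1 - A 0 1 * A 0 1 := by rw [h2, Matrix.det_fin_two, hb']
  have hdM : M 0 0 * M 1 1 - M 0 1 * M 0 1 = 0 := by
    rw [Matrix.det_fin_two, hq'] at hdet; exact hdet
  have h3' : κ₁ ^ 2 ≤ κ₂ ^ 2 := by
    rw [← sq_abs κ₁, ← sq_abs κ₂]; exact pow_le_pow_left₀ (abs_nonneg _) h3 2
  set a := A 0 0; set b := A 0 1; set d := A 1 1
  set p := M 0 0; set q := M 0 1; set s := M 1 1
  have hfr : frob2 (M - A) ^ 2 = (a - p) ^ 2 + (b - q) ^ 2 + (b - q) ^ 2 + (d - s) ^ 2 := by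
    rw [frob2_sq]; simp [Matrix.sub_apply, hb', hq']; ring
  have main : ∀ x y : ℝ, p * x + q * y = 0 → q * x + s * y = 0 → 0 < x ^ 2 + y ^ 2 →
      |κ₁| ≤ frob2 (M - A) := by
    intro x y hv1 hv2 hxy
    have step1 := psdA a b d κ₁ κ₂ x y htr hdA h3'
    have e1 : a * x + b * y = (a - p) * x + (b - q) * y := by linarith
    have e2 : b * x + d * y = (b - q) * x + (d - s) * y := by linarith
    have step2 : (a * x + b * y) ^ 2 + (b * x + d * y) ^ 2 ≤
        frob2 (M - A) ^ 2 * (x ^ 2 + y ^ 2) := by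
      rw [e1, e2, hfr]
      nlinarith [row_cs (a - p) (b - q) x y, row_cs (b - q) (d - s) x y,
        sq_nonneg ((b - q) * x), sq_nonneg ((b - q) * y), sq_nonneg x, sq_nonneg y]
    have hsq : κ₁ ^ 2 ≤ frob2 (M - A) ^ 2 := by
      have := step1.trans step2
      exact le_of_mul_le_mul_right (by linarith) hxy
    exact abs_le.mpr (abs_le_of_sq_le_sq' hsq (frob2_nonneg _))
  by_cases hqs : q = 0 ∧ s = 0
  · by_cases hp : p = 0
    · have hfr2 : frob2 (M - A) ^ 2 = a ^ 2 + b ^ 2 + b ^ 2 + d ^ 2 := by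
        rw [hfr, hp, hqs.1, hqs.2]; ring
      have hid : a ^ 2 + b ^ 2 + b ^ 2 + d ^ 2 = κ₁ ^ 2 + κ₂ ^ 2 := by
        linear_combination (-(a + d + κ₁ + κ₂)) * htr + 2 * hdA
      have hsq : κ₁ ^ 2 ≤ frob2 (M - A) ^ 2 := by rw [hfr2, hid]; nlinarith [sq_nonneg κ₂]
      exact abs_le.mpr (abs_le_of_sq_le_sq' hsq (frob2_nonneg _))
    · exact main q (-p) (by ring) (by linear_combination -hdM)
        (by nlinarith [sq_pos_of_ne_zero hp, sq_nonneg q])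
  · refine main s (-q) (by linear_combination hdM) (by ring) ?_
    rcases not_and_or.mp hqs with h | h
    · nlinarith [sq_pos_of_ne_zero h, sq_nonneg s]
    · nlinarith [sq_pos_of_ne_zero h, sq_nonneg q]

lemma bilin_cs (B : Matrix (Fin 2) (Fin 2) ℝ →ₗ[ℝ] Matrix (Fin 2) (Fin 2) ℝ →ₗ[ℝ] ℝ)
    (hsym : ∀ X Y, B X Y = B Y X)
    (hpos : ∀ M : Matrix (Fin 2) (Fin 2) ℝ, M.IsSymm → 0 ≤ B M M)
    (X Y : Matrix (Fin 2) (Fin 2) ℝ) (hX : X.IsSymm) (hY : Y.IsSymm)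
    (hYpos : 0 < B Y Y) : (B X Y) ^ 2 ≤ B X X * B Y Y := by
  set t := B X Y / B Y Y with ht
  have hXtY : (X - t • Y).IsSymm := hX.sub (hY.smul t)
  have h0 := hpos _ hXtY
  have hYX : B Y X = B X Y := hsym Y X
  have expand : B (X - t • Y) (X - t • Y) =
      B X X - 2 * t * B X Y + t ^ 2 * B Y Y := by
    simp [map_sub, _root_.map_smul, LinearMap.sub_apply, LinearMap.smul_apply, smul_eq_mul, hYX]
    ring
  rw [expand] at h0
  have htB : t * B Y Y = B X Y := by rw [ht]; field_simp
  nlinarith [h0, hYpos, htB, mul_nonneg h0 hYpos.le]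

lemma pen_bound (αp αm c₀ t m2abs dstar dt : ℝ) (hαp : c₀ ≤ αp) (hαm : c₀ ≤ αm)
    (hm2 : 0 ≤ m2abs) (ht : 0 ≤ t)
    (h : (dt = dstar - t * m2abs ∧ 0 ≤ dt ∧ 0 ≤ dstar) ∨
         (dt = dstar + t * m2abs ∧ dt ≤ 0 ∧ dstar ≤ 0)) :
    αp * max dt 0 + αm * max (-dt) 0 + c₀ * (t * m2abs) ≤
      αp * max dstar 0 + αm * max (-dstar) 0 := by
  rcases h with ⟨he, h1, h2⟩ | ⟨he, h1, h2⟩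
  · subst he
    rw [max_eq_left h1, max_eq_left h2, max_eq_right (by linarith : -(dstar - t * m2abs) ≤ 0),
      max_eq_right (by linarith : -dstar ≤ 0)]
    nlinarith [mul_le_mul_of_nonneg_right hαp (mul_nonneg ht hm2)]
  · subst he
    rw [max_eq_right h1, max_eq_right h2, max_eq_left (by linarith : (0:ℝ) ≤ -(dstar + t * m2abs)),
      max_eq_left (by linarith : (0:ℝ) ≤ -dstar)]
    nlinarith [mul_le_mul_of_nonneg_right hαm (mul_nonneg ht hm2)]

set_option maxHeartbeats 1000000 in
/-- every minimizer `M*` over symmetric matrices of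
`f(M) = Q(M−A) + α⁺ (det M)⁺ + α⁻ (det M)⁻` satisfies `‖M* − A‖ ≥ c |κ₁|`,
with `c > 0` depending only on `c₁, c₂, c₀`. The eigenvalues `κ₁, κ₂` of the
symmetric matrix `A` are encoded by `κ₁ + κ₂ = tr A`, `κ₁ κ₂ = det A`,
`|κ₁| ≤ |κ₂|`. -/
theorem stmt7 (c₁ c₂ c₀ : ℝ) (hc₁ : 0 < c₁) (hc₁₂ : c₁ ≤ c₂) (hc₀ : 0 < c₀) :
    ∃ c : ℝ, 0 < c ∧
      ∀ (Q : Matrix (Fin 2) (Fin 2) ℝ → ℝ)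
        (B : Matrix (Fin 2) (Fin 2) ℝ →ₗ[ℝ] Matrix (Fin 2) (Fin 2) ℝ →ₗ[ℝ] ℝ),
        (∀ X Y, B X Y = B Y X) → (∀ X, Q X = B X X) →
        (∀ M : Matrix (Fin 2) (Fin 2) ℝ, M.IsSymm → c₁ * frob2 M ^ 2 ≤ Q M) →
        (∀ M : Matrix (Fin 2) (Fin 2) ℝ, M.IsSymm → Q M ≤ c₂ * frob2 M ^ 2) →
        ∀ αp αm : ℝ, c₀ ≤ αp → c₀ ≤ αm →
        ∀ A : Matrix (Fin 2) (Fin 2) ℝ, A.IsSymm →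
        ∀ κ₁ κ₂ : ℝ, κ₁ + κ₂ = A.trace → κ₁ * κ₂ = A.det → |κ₁| ≤ |κ₂| →
        ∀ f : Matrix (Fin 2) (Fin 2) ℝ → ℝ,
        (∀ M, f M = Q (M - A) + αp * max M.det 0 + αm * max (-M.det) 0) →
        ∀ Mstar : Matrix (Fin 2) (Fin 2) ℝ, Mstar.IsSymm →
          (∀ M : Matrix (Fin 2) (Fin 2) ℝ, M.IsSymm → f Mstar ≤ f M) →
          c * |κ₁| ≤ frob2 (Mstar - A) := by
  have hc₂ : 0 < c₂ := lt_of_lt_of_le hc₁ hc₁₂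
  have hden : 0 < 2 * c₂ + c₀ := by linarith
  refine ⟨c₀ / (2 * c₂ + c₀), div_pos hc₀ hden, ?_⟩
  intro Q B hBsym hQB hlow hupp αp αm hαp hαm A hA κ₁ κ₂ hk1 hk2 hk12 f hf Mstar hMs hmin
  set r := frob2 (Mstar - A) with hr
  have hr0 : 0 ≤ r := frob2_nonneg _
  have hE : (Mstar - A).IsSymm := hMs.sub hA
  by_cases hdet0 : Mstar.det = 0
  · -- Eckart–Young : r ≥ |κ₁|
    have h := eckart A Mstar hA hMs κ₁ κ₂ hk1 hk2 hk12 hdet0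
    have hc_le : c₀ / (2 * c₂ + c₀) ≤ 1 := by rw [div_le_one hden]; linarith
    calc c₀ / (2 * c₂ + c₀) * |κ₁| ≤ 1 * |κ₁| :=
          mul_le_mul_of_nonneg_right hc_le (abs_nonneg _)
      _ = |κ₁| := one_mul _
      _ ≤ r := h
  · obtain ⟨μ₁, μ₂, hm1, hm2, hm12⟩ := eig_exists Mstar hMs
    have hdMs : Mstar.det = μ₁ * μ₂ := hm2.symm
    have hprod : μ₁ * μ₂ ≠ 0 := by rw [← hdMs]; exact hdet0
    have hμ₁ : μ₁ ≠ 0 := fun h => hprod (by rw [h]; ring)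
    have habs1 : 0 < |μ₁| := abs_pos.mpr hμ₁
    have hBpos : ∀ M : Matrix (Fin 2) (Fin 2) ℝ, M.IsSymm → 0 ≤ B M M := by
      intro M hMsym
      have := hlow M hMsym
      rw [hQB] at this
      nlinarith [sq_nonneg (frob2 M)]
    -- the key perturbation inequality
    have key : ∀ t : ℝ, 0 < t → t < |μ₁| → c₀ * |μ₂| ≤ 2 * c₂ * r + c₂ * t := by
      intro t ht htμ
      set σ : ℝ := if 0 ≤ μ₁ then 1 else -1 with hσ
      have hσμ : σ * μ₁ = |μ₁| := by
        rw [hσ]; split_ifs with h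
        · rw [abs_of_nonneg h]; ring
        · rw [abs_of_neg (not_le.mp h)]; ring
      have hστ : |σ * t| = t := by
        rw [abs_mul, abs_of_pos ht, hσ]; split_ifs <;> norm_num
      obtain ⟨N, hNs, hNfr, hNdet⟩ := spectral Mstar hMs μ₁ μ₂ hm1 hm2 (σ * t)
      rw [hστ] at hNfr
      have hMts : (Mstar - N).IsSymm := hMs.sub hNs
      have hmin' := hmin _ hMts
      rw [hf, hf] at hmin'
      -- penalty step
      have hpen : αp * max (Mstar - N).det 0 + αm * max (-(Mstar - N).det) 0 + c₀ * (t * |μ₂|) ≤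
          αp * max Mstar.det 0 + αm * max (-Mstar.det) 0 := by
        apply pen_bound αp αm c₀ t |μ₂| Mstar.det (Mstar - N).det hαp hαm (abs_nonneg _) ht.le
        rcases hprod.lt_or_gt with hneg | hpos
        · -- μ₁ μ₂ < 0
          right
          have hσ2 : σ * μ₂ = -|μ₂| := by
            rw [hσ]; split_ifs with h
            · have hμ₁pos : 0 < μ₁ := lt_of_le_of_ne h (Ne.symm hμ₁)
              have hμ₂neg : μ₂ < 0 := by nlinarith
              rw [abs_of_neg hμ₂neg]; ring
            · have hμ₁neg : μ₁ < 0 := not_le.mp h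
              have hμ₂pos : 0 < μ₂ := by nlinarith
              rw [abs_of_pos hμ₂pos]; ring
          have hdt_eq : (Mstar - N).det = Mstar.det + t * |μ₂| := by
            rw [hNdet, hdMs]
            linear_combination (-t) * hσ2
          refine ⟨hdt_eq, ?_, by rw [hdMs]; exact hneg.le⟩
          have e2 : (Mstar - N).det = -((|μ₁| - t) * |μ₂|) := by
            rw [hNdet]
            have : μ₁ - σ * t = σ * (|μ₁| - t) := by
              rw [← hσμ]
              have hσσ : σ * σ = 1 := by rw [hσ]; split_ifs <;> norm_num
              linear_combination (-μ₁) * hσσ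
            rw [this]
            linear_combination (|μ₁| - t) * hσ2
          rw [e2]
          have : 0 ≤ (|μ₁| - t) * |μ₂| := mul_nonneg (by linarith) (abs_nonneg _)
          linarith
        · -- μ₁ μ₂ > 0
          left
          have hσ2 : σ * μ₂ = |μ₂| := by
            rw [hσ]; split_ifs with h
            · have hμ₁pos : 0 < μ₁ := lt_of_le_of_ne h (Ne.symm hμ₁)
              have hμ₂pos : 0 < μ₂ := by nlinarith
              rw [abs_of_pos hμ₂pos]; ring
            · have hμ₁neg : μ₁ < 0 := not_le.mp h
              have hμ₂neg : μ₂ < 0 := by nlinarith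
              rw [abs_of_neg hμ₂neg]; ring
          have hdt_eq : (Mstar - N).det = Mstar.det - t * |μ₂| := by
            rw [hNdet, hdMs]
            linear_combination (-t) * hσ2
          refine ⟨hdt_eq, ?_, by rw [hdMs]; exact hpos.le⟩
          have e2 : (Mstar - N).det = (|μ₁| - t) * |μ₂| := by
            rw [hNdet]
            have : μ₁ - σ * t = σ * (|μ₁| - t) := by
              rw [← hσμ]
              have hσσ : σ * σ = 1 := by rw [hσ]; split_ifs <;> norm_num
              linear_combination (-μ₁) * hσσ
            rw [this]
            linear_combination (|μ₁| - t) * hσ2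
          rw [e2]
          exact mul_nonneg (by linarith) (abs_nonneg _)
      -- quadratic expansion
      have hdiff : Mstar - N - A = (Mstar - A) - N := sub_right_comm Mstar N A
      have hexp : Q (Mstar - N - A) = B (Mstar - A) (Mstar - A) - 2 * B (Mstar - A) N + B N N := by
        rw [hdiff, hQB]
        simp only [map_sub, LinearMap.sub_apply]
        rw [hBsym A Mstar, hBsym N Mstar, hBsym N A]
        ring
      -- bounds
      have hQN_up : B N N ≤ c₂ * t ^ 2 := by
        have := hupp N hNs
        rw [hQB, hNfr] at this
        exact this
      have hQN_low : 0 < B N N := by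
        have := hlow N hNs
        rw [hQB, hNfr] at this
        nlinarith [this, mul_pos hc₁ (mul_pos ht ht)]
      have hQE_up : B (Mstar - A) (Mstar - A) ≤ c₂ * r ^ 2 := by
        have := hupp _ hE
        rw [hQB] at this
        exact this
      have hQE_low : 0 ≤ B (Mstar - A) (Mstar - A) := hBpos _ hE
      have hBEN : -(c₂ * r * t) ≤ B (Mstar - A) N := by
        have hcs := bilin_cs B hBsym hBpos (Mstar - A) N hE hNs hQN_low
        have hsq : (B (Mstar - A) N) ^ 2 ≤ (c₂ * r * t) ^ 2 := by
          calc (B (Mstar - A) N) ^ 2 ≤ B (Mstar - A) (Mstar - A) * B N N := hcs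
            _ ≤ (c₂ * r ^ 2) * (c₂ * t ^ 2) := by
                apply mul_le_mul hQE_up hQN_up hQN_low.le (by positivity)
            _ = (c₂ * r * t) ^ 2 := by ring
        exact (abs_le_of_sq_le_sq' hsq (by positivity)).1
      -- combine
      have hQE := hQB (Mstar - A)
      have hstep : c₀ * (t * |μ₂|) ≤ 2 * (c₂ * r * t) + c₂ * t ^ 2 := by
        rw [hexp] at hmin'
        rw [hQE] at hmin'
        linarith [hmin', hpen, hQN_up, hBEN]
      have h' : c₀ * |μ₂| * t ≤ (2 * c₂ * r + c₂ * t) * t := by nlinarith [hstep]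
      exact le_of_mul_le_mul_right h' ht
    -- take t → 0
    have hlim : c₀ * |μ₂| ≤ 2 * c₂ * r := by
      by_contra hcon
      push_neg at hcon
      set t := min (|μ₁| / 2) ((c₀ * |μ₂| - 2 * c₂ * r) / (2 * c₂)) with htdef
      have ht1 : 0 < t := lt_min (by linarith) (div_pos (by linarith) (by linarith))
      have ht2 : t < |μ₁| := lt_of_le_of_lt (min_le_left _ _) (by linarith)
      have hK := key t ht1 ht2
      have htle : c₂ * t ≤ (c₀ * |μ₂| - 2 * c₂ * r) / 2 := by
        calc c₂ * t ≤ c₂ * ((c₀ * |μ₂| - 2 * c₂ * r) / (2 * c₂)) :=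
              mul_le_mul_of_nonneg_left (min_le_right _ _) hc₂.le
          _ = (c₀ * |μ₂| - 2 * c₂ * r) / 2 := by field_simp
      linarith
    -- Weyl-type bound : |μ₂| ≥ |κ₁| - r
    have hq' : Mstar 1 0 = Mstar 0 1 := hMs.apply 0 1
    have hb' : A 1 0 = A 0 1 := hA.apply 0 1
    have htr' : μ₁ + μ₂ = Mstar 0 0 + Mstar 1 1 := by rw [hm1, Matrix.trace_fin_two]
    have hdt' : μ₁ * μ₂ = Mstar 0 0 * Mstar 1 1 - Mstar 0 1 * Mstar 0 1 := by
      rw [hm2, Matrix.det_fin_two, hq']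
    have htrA : κ₁ + κ₂ = A 0 0 + A 1 1 := by rw [hk1, Matrix.trace_fin_two]
    have hdtA : κ₁ * κ₂ = A 0 0 * A 1 1 - A 0 1 * A 0 1 := by
      rw [hk2, Matrix.det_fin_two, hb']
    have hnormM : frob2 Mstar ^ 2 = μ₁ ^ 2 + μ₂ ^ 2 := by
      rw [frob2_sq, hq']
      linear_combination (-(Mstar 0 0 + Mstar 1 1 + μ₁ + μ₂)) * htr' + 2 * hdt'
    have hnormA : frob2 A ^ 2 = κ₁ ^ 2 + κ₂ ^ 2 := by
      rw [frob2_sq, hb']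
      linear_combination (-(A 0 0 + A 1 1 + κ₁ + κ₂)) * htrA + 2 * hdtA
    have hm12' : μ₁ ^ 2 ≤ μ₂ ^ 2 := by
      rw [← sq_abs μ₁, ← sq_abs μ₂]; exact pow_le_pow_left₀ (abs_nonneg _) hm12 2
    have hk12' : κ₁ ^ 2 ≤ κ₂ ^ 2 := by
      rw [← sq_abs κ₁, ← sq_abs κ₂]; exact pow_le_pow_left₀ (abs_nonneg _) hk12 2
    have s2nn : (0:ℝ) ≤ Real.sqrt 2 := Real.sqrt_nonneg 2
    have s2sq : Real.sqrt 2 ^ 2 = 2 := Real.sq_sqrt (by norm_num)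
    have hMb : frob2 Mstar ≤ Real.sqrt 2 * |μ₂| := by
      have hsq : frob2 Mstar ^ 2 ≤ (Real.sqrt 2 * |μ₂|) ^ 2 := by
        rw [mul_pow, s2sq, sq_abs, hnormM]; linarith
      exact (abs_le_of_sq_le_sq' hsq (by positivity)).2
    have hAb : Real.sqrt 2 * |κ₁| ≤ frob2 A := by
      have hsq : (Real.sqrt 2 * |κ₁|) ^ 2 ≤ frob2 A ^ 2 := by
        rw [mul_pow, s2sq, sq_abs, hnormA]; linarith
      exact (abs_le_of_sq_le_sq' hsq (frob2_nonneg A)).2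
    have htri : frob2 A ≤ frob2 Mstar + r := by
      have hAe : Mstar + (A - Mstar) = A := by
        ext i j; simp [Matrix.add_apply, Matrix.sub_apply]
      calc frob2 A = frob2 (Mstar + (A - Mstar)) := by rw [hAe]
        _ ≤ frob2 Mstar + frob2 (A - Mstar) := frob2_triangle _ _
        _ = frob2 Mstar + r := by rw [frob2_sub_comm]
    have hμκ : |κ₁| - r ≤ |μ₂| := by
      by_contra hcc
      push_neg at hcc
      have s2pos : 0 < Real.sqrt 2 := Real.sqrt_pos.mpr (by norm_num)
      have h1 : Real.sqrt 2 * |μ₂| < Real.sqrt 2 * (|κ₁| - r) :=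
        mul_lt_mul_of_pos_left hcc s2pos
      have s2ge1 : 1 ≤ Real.sqrt 2 := by nlinarith [s2sq, s2nn]
      nlinarith [hMb, hAb, htri, h1, mul_le_mul_of_nonneg_right s2ge1 hr0]
    have hfinal : c₀ * |κ₁| ≤ (2 * c₂ + c₀) * r := by
      have h5 : c₀ * (|κ₁| - r) ≤ c₀ * |μ₂| := mul_le_mul_of_nonneg_left hμκ hc₀.le
      nlinarith [hlim, h5]
    rw [div_mul_eq_mul_div, div_le_iff₀ hden]
    linarith [hfinal]
end

section
/- Let A, B ∈ Sym₂(ℝ), let κ₁, κ₂ denote the eigenvalues of A ordered so that |κ₁| ≤ |κ₂|, and suppose det B = 0 and ‖B − A‖ < |κ₂|. Then |κ₁|·|κ₂| ≤ (√2 + 1)·|κ₂|·‖B − A‖; in particular ‖B − A‖ ≥ |κ₁|/(√2 + 1). -/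
open Matrix

set_option maxHeartbeats 1000000 in
/-- if `A, B` are symmetric 2×2 matrices, `κ₁, κ₂` are the eigenvalues
of `A` (encoded by `κ₁ + κ₂ = tr A`, `κ₁ κ₂ = det A`, `|κ₁| ≤ |κ₂|`), `det B = 0` and
`‖B − A‖ < |κ₂|`, then `|κ₁| |κ₂| ≤ (√2 + 1) |κ₂| ‖B − A‖`; in particular
`‖B − A‖ ≥ |κ₁| / (√2 + 1)`. -/
theorem stmt9 (A B : Matrix (Fin 2) (Fin 2) ℝ) (hA : A.IsSymm) (hB : B.IsSymm)
    (κ₁ κ₂ : ℝ) (htr : κ₁ + κ₂ = A.trace) (hdet : κ₁ * κ₂ = A.det)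
    (hord : |κ₁| ≤ |κ₂|) (hdetB : B.det = 0) (hclose : frob2 (B - A) < |κ₂|) :
    |κ₁| * |κ₂| ≤ (Real.sqrt 2 + 1) * |κ₂| * frob2 (B - A) ∧
    |κ₁| / (Real.sqrt 2 + 1) ≤ frob2 (B - A) := by
  set F := frob2 (B - A) with hFdef
  have hF0 : 0 ≤ F := Real.sqrt_nonneg _
  have hκ2 : 0 < |κ₂| := lt_of_le_of_lt hF0 hclose
  set a := A 0 0 with ha
  set b := A 0 1 with hb
  set d := A 1 1 with hd
  set e := (B - A) 0 0 with he
  set f := (B - A) 0 1 with hf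
  set k := (B - A) 1 1 with hk
  have hAs : A 1 0 = b := hA.apply 0 1
  have hHs : (B - A) 1 0 = f := (hB.sub hA).apply 0 1
  have hFsq : F ^ 2 = e ^ 2 + 2 * f ^ 2 + k ^ 2 := by
    rw [hFdef, frob2, Real.sq_sqrt (by positivity), Fin.sum_univ_two, Fin.sum_univ_two,
      Fin.sum_univ_two, hHs, ← he, ← hf, ← hk]
    ring
  have htr' : κ₁ + κ₂ = a + d := by rw [htr, Matrix.trace_fin_two]
  have hdet' : κ₁ * κ₂ = a * d - b * b := by rw [hdet, Matrix.det_fin_two, hAs]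
  have hB00 : B 0 0 = a + e := by simp [he, ha, Matrix.sub_apply]
  have hB01 : B 0 1 = b + f := by simp [hf, hb, Matrix.sub_apply]
  have hB11 : B 1 1 = d + k := by simp [hk, hd, Matrix.sub_apply]
  have hB10 : B 1 0 = b + f := by rw [hB.apply 0 1, hB01]
  have hdB : (a + e) * (d + k) - (b + f) * (b + f) = 0 := by
    rw [Matrix.det_fin_two, hB00, hB01, hB10, hB11] at hdetB
    linarith [hdetB]
  clear_value a b d e f k F
  clear hdetB htr hdet hA hB hAs hHs hB00 hB01 hB11 hB10 hFdef
  have hkey : κ₁ * κ₂ = -((a * k + d * e - 2 * b * f) + (e * k - f ^ 2)) := by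
    linear_combination hdet' + hdB
  set P := a * k + d * e - 2 * b * f with hP'
  set Q := e * k - f ^ 2 with hQ'
  clear_value P Q
  have h1 : P ^ 2 ≤ (a ^ 2 + d ^ 2 + 2 * b ^ 2) * (e ^ 2 + 2 * f ^ 2 + k ^ 2) := by
    rw [hP']
    nlinarith [sq_nonneg (a * e - d * k), sq_nonneg (a * f + b * k), sq_nonneg (d * f + b * e)]
  have hsqκ : κ₁ ^ 2 ≤ κ₂ ^ 2 := by
    rw [← sq_abs κ₁, ← sq_abs κ₂]
    exact pow_le_pow_left₀ (abs_nonneg κ₁) hord 2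
  have heqad : a ^ 2 + d ^ 2 + 2 * b ^ 2 = κ₁ ^ 2 + κ₂ ^ 2 := by
    linear_combination (-(a + d + κ₁ + κ₂)) * htr' + 2 * hdet'
  have h2 : a ^ 2 + d ^ 2 + 2 * b ^ 2 ≤ 2 * κ₂ ^ 2 := by rw [heqad]; linarith [hsqκ]
  have hs0 : (0:ℝ) ≤ e ^ 2 + 2 * f ^ 2 + k ^ 2 := by positivity
  have hP2 : P ^ 2 ≤ 2 * κ₂ ^ 2 * F ^ 2 := by
    rw [hFsq]
    calc P ^ 2 ≤ (a ^ 2 + d ^ 2 + 2 * b ^ 2) * (e ^ 2 + 2 * f ^ 2 + k ^ 2) := h1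
      _ ≤ 2 * κ₂ ^ 2 * (e ^ 2 + 2 * f ^ 2 + k ^ 2) := mul_le_mul_of_nonneg_right h2 hs0
  have hP : |P| ≤ Real.sqrt 2 * |κ₂| * F := by
    have h := Real.sqrt_le_sqrt hP2
    rw [Real.sqrt_sq_eq_abs] at h
    have heq : Real.sqrt (2 * κ₂ ^ 2 * F ^ 2) = Real.sqrt 2 * |κ₂| * F := by
      rw [show 2 * κ₂ ^ 2 * F ^ 2 = 2 * (κ₂ ^ 2 * F ^ 2) by ring,
        Real.sqrt_mul (by norm_num), Real.sqrt_mul (sq_nonneg _),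
        Real.sqrt_sq_eq_abs, Real.sqrt_sq hF0]
      ring
    rwa [heq] at h
  have hQ : |Q| ≤ F ^ 2 := by
    rw [abs_le]
    constructor
    · nlinarith [hFsq, sq_nonneg (e + k)]
    · nlinarith [hFsq, sq_nonneg (e - k)]
  have hsum : |κ₁ * κ₂| ≤ |P| + |Q| := by rw [hkey, abs_neg]; exact abs_add_le _ _
  have final1 : |κ₁| * |κ₂| ≤ (Real.sqrt 2 + 1) * |κ₂| * F := by
    have hF2 : F ^ 2 ≤ |κ₂| * F := by
      calc F ^ 2 = F * F := sq F
        _ ≤ |κ₂| * F := mul_le_mul_of_nonneg_right hclose.le hF0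
    have hexp : (Real.sqrt 2 + 1) * |κ₂| * F = Real.sqrt 2 * |κ₂| * F + |κ₂| * F := by ring
    rw [← abs_mul]
    linarith [hsum, hP, hQ, hF2, hexp]
  refine ⟨final1, ?_⟩
  have hs1 : 0 < Real.sqrt 2 + 1 := by positivity
  have h3 : |κ₁| ≤ (Real.sqrt 2 + 1) * F := by
    rw [← mul_le_mul_iff_of_pos_right hκ2]
    have hexp2 : (Real.sqrt 2 + 1) * F * |κ₂| = (Real.sqrt 2 + 1) * |κ₂| * F := by ring
    linarith [final1, hexp2]
  rw [div_le_iff₀ hs1]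
  have hexp3 : (Real.sqrt 2 + 1) * F = F * (Real.sqrt 2 + 1) := by ring
  linarith [h3, hexp3]
end

section
/- Let W : ℝ^{3×3} → ℝ satisfy: (a) frame indifference, W(R·F) = W(F) for every R ∈ SO(3) and F ∈ ℝ^{3×3}; (b) coercivity, W(F) ≥ c·dist(F, SO(3))² for every F ∈ ℝ^{3×3}, for some c > 0; and (c) there exist a quadratic form Q₃ on ℝ^{3×3} and a function ω : [0,∞) → [0,∞] with ω(t)/t² → 0 as t → 0⁺ such that |W(I + B) − Q₃(B)| ≤ ω(‖B‖) for every B ∈ ℝ^{3×3}. Then Q₃(B) = Q₃(sym B) and Q₃(B) ≥ c·‖sym B‖² for every B ∈ ℝ^{3×3}. -/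
open Matrix

/-- The Frobenius norm of a real 3×3 matrix. -/
noncomputable def frob3 (A : Matrix (Fin 3) (Fin 3) ℝ) : ℝ :=
  Real.sqrt (∑ i, ∑ j, A i j ^ 2)

/-- The set of rotations of ℝ³. -/
def SO3 : Set (Matrix (Fin 3) (Fin 3) ℝ) := {R | Rᵀ * R = 1 ∧ R.det = 1}

/-- The Frobenius distance from a matrix to `SO(3)`. -/
noncomputable def distSO3 (F : Matrix (Fin 3) (Fin 3) ℝ) : ℝ :=
  sInf ((fun R => frob3 (F - R)) '' SO3)

/-- The symmetric part of a 3×3 matrix. -/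
noncomputable def symPart3 (X : Matrix (Fin 3) (Fin 3) ℝ) : Matrix (Fin 3) (Fin 3) ℝ :=
  (1 / 2 : ℝ) • (X + Xᵀ)

attribute [local instance] Matrix.frobeniusNormedAddCommGroup Matrix.frobeniusNormedSpace

local notation "M3" => Matrix (Fin 3) (Fin 3) ℝ

open Filter

lemma frob3_eq_norm (A : M3) : frob3 A = ‖A‖ := by
  rw [Matrix.frobenius_norm_def, frob3, Real.sqrt_eq_rpow]
  congr 1
  refine Finset.sum_congr rfl fun i _ => Finset.sum_congr rfl fun j _ => ?_
  rw [Real.norm_eq_abs, show (2:ℝ) = ((2:ℕ):ℝ) by norm_num, Real.rpow_natCast, sq_abs]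

lemma entry_le_norm (A : M3) (i j : Fin 3) : |A i j| ≤ ‖A‖ := by
  rw [← frob3_eq_norm, frob3, ← Real.sqrt_sq_eq_abs]
  apply Real.sqrt_le_sqrt
  calc A i j ^ 2 ≤ ∑ j', A i j' ^ 2 :=
        Finset.single_le_sum (f := fun j' => A i j' ^ 2) (fun k _ => sq_nonneg _)
          (Finset.mem_univ j)
    _ ≤ ∑ i', ∑ j', A i' j' ^ 2 := Finset.single_le_sum (f := fun i' => ∑ j', A i' j' ^ 2)
        (fun k _ => Finset.sum_nonneg fun _ _ => sq_nonneg _) (Finset.mem_univ i)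

lemma norm_one3 : ‖(1 : M3)‖ = Real.sqrt 3 := by
  rw [← frob3_eq_norm, frob3]
  norm_num [Fin.sum_univ_three, Matrix.one_apply]

lemma lin_bound (f : M3 →ₗ[ℝ] ℝ) (Q : M3) :
    |f Q| ≤ (∑ r, ∑ t, |f (single r t 1)|) * ‖Q‖ := by
  conv_lhs => rw [show Q = ∑ r, ∑ t, Q r t • single r t 1 by
    conv_lhs => rw [matrix_eq_sum_single Q]
    simp [smul_single, smul_eq_mul]]
  rw [map_sum]
  refine (Finset.abs_sum_le_sum_abs _ _).trans ?_
  rw [Finset.sum_mul]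
  refine Finset.sum_le_sum fun r _ => ?_
  rw [map_sum]
  refine (Finset.abs_sum_le_sum_abs _ _).trans ?_
  rw [Finset.sum_mul]
  refine Finset.sum_le_sum fun t _ => ?_
  rw [_root_.map_smul, smul_eq_mul, abs_mul, mul_comm]
  exact mul_le_mul_of_nonneg_left (entry_le_norm Q r t) (abs_nonneg _)

lemma bilin_bound (B : M3 →ₗ[ℝ] M3 →ₗ[ℝ] ℝ) :
    ∃ K : ℝ, 0 ≤ K ∧ ∀ P Q, |B P Q| ≤ K * ‖P‖ * ‖Q‖ := by
  refine ⟨∑ r, ∑ t, ∑ p, ∑ q, |B (single p q 1) (single r t 1)|,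
    by positivity, fun P Q => ?_⟩
  calc |B P Q| ≤ (∑ r, ∑ t, |B P (single r t 1)|) * ‖Q‖ := lin_bound (B P) Q
    _ ≤ ((∑ r, ∑ t, (∑ p, ∑ q, |B (single p q 1) (single r t 1)|) * ‖P‖)) * ‖Q‖ := by
        refine mul_le_mul_of_nonneg_right
          (Finset.sum_le_sum fun r _ => Finset.sum_le_sum fun t _ => ?_) (norm_nonneg _)
        have := lin_bound (B.flip (single r t 1)) P
        simpa [LinearMap.flip_apply] using this
    _ = _ := by simp only [← Finset.sum_mul]

lemma skew_entries {u : M3} (hu : uᵀ = -u) (i j : Fin 3) :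
    u j i = -(u i j) := by
  have := congrFun (congrFun hu i) j
  simpa [Matrix.transpose_apply] using this

lemma det_one_sub_skew {u : M3} (hu : uᵀ = -u) :
    1 ≤ (1 - u).det := by
  have h00 : u 0 0 = 0 := by have := skew_entries hu 0 0; linarith
  have h11 : u 1 1 = 0 := by have := skew_entries hu 1 1; linarith
  have h22 : u 2 2 = 0 := by have := skew_entries hu 2 2; linarith
  have h10 : u 1 0 = -(u 0 1) := skew_entries hu 0 1
  have h20 : u 2 0 = -(u 0 2) := skew_entries hu 0 2
  have h21 : u 2 1 = -(u 1 2) := skew_entries hu 1 2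
  rw [Matrix.det_fin_three]
  simp only [Matrix.sub_apply, Matrix.one_apply, Fin.ext_iff]
  norm_num [h00, h11, h22, h10, h20, h21]
  nlinarith [sq_nonneg (u 0 1), sq_nonneg (u 0 2), sq_nonneg (u 1 2)]

lemma cayley_expand {u : M3} (hdet : IsUnit (1 - u).det) :
    (1 + u) * (1 - u)⁻¹ = 1 + (2:ℝ)•u + (2:ℝ)•(u*u*(1-u)⁻¹) := by
  have hvu : (1-u)⁻¹ * (1-u) = 1 := Matrix.nonsing_inv_mul _ hdet
  have hT : ((1:M3) + (2:ℝ)•u + (2:ℝ)•(u*u*(1-u)⁻¹)) * (1-u)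
      = 1 + u := by
    have h2 : u*u*(1-u)⁻¹*(1-u) = u*u := by rw [mul_assoc, hvu, mul_one]
    simp only [two_smul]
    rw [add_mul, add_mul, add_mul, add_mul, h2]
    noncomm_ring
  calc (1 + u) * (1 - u)⁻¹
      = (((1:M3) + (2:ℝ)•u + (2:ℝ)•(u*u*(1-u)⁻¹)) * (1-u)) * (1-u)⁻¹ := by
        rw [hT]
  _ = _ := by rw [mul_assoc, Matrix.mul_nonsing_inv _ hdet, mul_one]

lemma cayley_mem_SO3 {u : M3} (hu : uᵀ = -u) (hdet : IsUnit (1 - u).det) :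
    (1 + u) * (1 - u)⁻¹ ∈ SO3 := by
  have htr : (1 - u)ᵀ = 1 + u := by
    rw [Matrix.transpose_sub, Matrix.transpose_one, hu, sub_neg_eq_add]
  have hdet' : IsUnit (1 + u).det := by rw [← htr, Matrix.det_transpose]; exact hdet
  constructor
  · have hRT : ((1 + u) * (1 - u)⁻¹)ᵀ = (1 + u)⁻¹ * (1 - u) := by
      rw [Matrix.transpose_mul, Matrix.transpose_nonsing_inv, htr]
      congr 1
      rw [Matrix.transpose_add, Matrix.transpose_one, hu]
      abel
    rw [hRT]
    have hcomm : (1 - u) * (1 + u) = (1 + u) * (1 - u) := by noncomm_ring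
    rw [show (1+u)⁻¹ * (1-u) * ((1+u) * (1-u)⁻¹) = (1+u)⁻¹ * ((1-u) * (1+u)) * (1-u)⁻¹ by
      simp only [mul_assoc]]
    rw [hcomm, show (1+u)⁻¹ * ((1+u) * (1-u)) * (1-u)⁻¹
        = ((1+u)⁻¹ * (1+u)) * ((1-u) * (1-u)⁻¹) by simp only [mul_assoc]]
    rw [Matrix.nonsing_inv_mul _ hdet', Matrix.mul_nonsing_inv _ hdet, one_mul]
  · rw [Matrix.det_mul, Matrix.det_nonsing_inv, ← htr, Matrix.det_transpose,
      Ring.inverse_eq_inv']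
    have : (1 - u).det ≠ 0 := hdet.ne_zero
    field_simp

lemma one_mem_SO3 : (1 : M3) ∈ SO3 := ⟨by simp, by simp⟩

lemma inv_bound {u : M3} (hdet : IsUnit (1-u).det) (hu : ‖u‖ ≤ 1/2) :
    ‖(1-u)⁻¹‖ ≤ 2 * Real.sqrt 3 := by
  have hvu : (1-u)⁻¹ * (1-u) = 1 := Matrix.nonsing_inv_mul _ hdet
  have hexp : (1-u)⁻¹ * (1-u) = (1-u)⁻¹ - (1-u)⁻¹ * u := by noncomm_ring
  rw [hexp] at hvu
  have hv : (1-u)⁻¹ = 1 + (1-u)⁻¹ * u := eq_add_of_sub_eq hvu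
  have h1 : ‖(1-u)⁻¹‖ ≤ ‖(1:M3)‖ + ‖(1-u)⁻¹‖ * ‖u‖ := by
    calc ‖(1-u)⁻¹‖ = ‖(1:M3) + (1-u)⁻¹ * u‖ := by rw [← hv]
      _ ≤ ‖(1:M3)‖ + ‖(1-u)⁻¹ * u‖ := norm_add_le _ _
      _ ≤ ‖(1:M3)‖ + ‖(1-u)⁻¹‖ * ‖u‖ := by
          linarith [Matrix.frobenius_norm_mul (1-u)⁻¹ u]
  rw [norm_one3] at h1
  nlinarith [norm_nonneg ((1-u)⁻¹), Real.sqrt_nonneg 3]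

lemma dist_lb {s : M3} (hs : sᵀ = s) {t ε : ℝ} (ht : 0 < t) (hε : 0 < ε)
    (hδ : 2 * t * ‖s‖^2 ≤ ε) {R : M3} (hR : R ∈ SO3) :
    t * (‖s‖ - ε) ≤ ‖(1 + t•s : M3) - R‖ := by
  set d := ‖(1 + t•s : M3) - R‖ with hd
  have hd0 : 0 ≤ d := norm_nonneg _
  obtain ⟨E, hEdef⟩ : ∃ E : M3, E = R - 1 := ⟨_, rfl⟩
  have hE : E + Eᵀ = -(Eᵀ*E) := by
    have h1 : (R-1) + (Rᵀ-1) + (Rᵀ-1)*(R-1) = Rᵀ*R - 1 := by noncomm_ring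
    rw [hR.1] at h1
    simp only [sub_self] at h1
    have := eq_neg_of_add_eq_zero_left h1
    simpa [hEdef, Matrix.transpose_sub, Matrix.transpose_one] using this
  have hkey : t•s + (2⁻¹:ℝ)•(Eᵀ*E) = (2⁻¹:ℝ)•((t•s - E) + (t•s - E)ᵀ) := by
    rw [Matrix.transpose_sub, Matrix.transpose_smul, hs]
    rw [show (t•s - E) + (t•s - Eᵀ) = t•s + t•s - (E + Eᵀ) by abel, hE]
    module
  have hdiff : (1 + t•s : M3) - R = t•s - E := by rw [hEdef]; abel
  have hEd : ‖E‖ ≤ d + t*‖s‖ := by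
    have : E = -((1 + t•s : M3) - R) + t•s := by rw [hEdef]; abel
    rw [this]
    refine (norm_add_le _ _).trans ?_
    rw [norm_neg, norm_smul, Real.norm_eq_abs, abs_of_pos ht]
  have hlow : t*‖s‖ - (2⁻¹:ℝ)*‖E‖^2 ≤ d := by
    have h1 : ‖t•s + (2⁻¹:ℝ)•(Eᵀ*E)‖ ≤ d := by
      rw [hkey, hd, hdiff]
      refine (norm_smul _ _).le.trans ?_
      rw [Real.norm_eq_abs]
      have := norm_add_le (t•s - E) ((t•s - E)ᵀ)
      rw [Matrix.frobenius_norm_transpose] at this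
      calc |(2⁻¹:ℝ)| * ‖(t•s - E) + (t•s - E)ᵀ‖ ≤ |(2⁻¹:ℝ)| * (‖t•s - E‖ + ‖t•s - E‖) := by
            refine mul_le_mul_of_nonneg_left this (abs_nonneg _)
        _ = ‖t•s - E‖ := by rw [abs_of_pos (by norm_num : (0:ℝ) < 2⁻¹)]; ring
    have h2 : ‖t•s‖ - ‖(2⁻¹:ℝ)•(Eᵀ*E)‖ ≤ ‖t•s + (2⁻¹:ℝ)•(Eᵀ*E)‖ := by
      have h3 := norm_sub_le (t•s + (2⁻¹:ℝ)•(Eᵀ*E)) ((2⁻¹:ℝ)•(Eᵀ*E))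
      rw [add_sub_cancel_right] at h3
      linarith
    have h4 : ‖(2⁻¹:ℝ)•(Eᵀ*E)‖ ≤ (2⁻¹:ℝ) * ‖E‖^2 := by
      refine (norm_smul _ _).le.trans ?_
      rw [Real.norm_eq_abs, abs_of_pos (by norm_num : (0:ℝ) < 2⁻¹)]
      refine mul_le_mul_of_nonneg_left ?_ (by norm_num)
      calc ‖Eᵀ*E‖ ≤ ‖Eᵀ‖ * ‖E‖ := Matrix.frobenius_norm_mul _ _
        _ = ‖E‖^2 := by rw [Matrix.frobenius_norm_transpose]; ring
    have h5 : ‖t•s‖ = t * ‖s‖ := by rw [norm_smul, Real.norm_eq_abs, abs_of_pos ht]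
    linarith
  rcases le_or_gt (t*‖s‖) d with h | h
  · nlinarith [norm_nonneg s]
  · nlinarith [norm_nonneg s, norm_nonneg E, hd0, ht.le,
      mul_le_mul hEd hEd (norm_nonneg E) (by positivity : (0:ℝ) ≤ d + t*‖s‖),
      mul_le_mul_of_nonneg_left hδ ht.le,
      mul_pos ht (mul_pos ht (mul_self_pos.mpr (by nlinarith [norm_nonneg s] : ‖s‖ ≠ 0)))]

set_option maxHeartbeats 1000000 in
lemma lim_lemma (W : M3 → ℝ) (B : M3 →ₗ[ℝ] M3 →ₗ[ℝ] ℝ) (K : ℝ) (hK : 0 ≤ K)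
    (hKb : ∀ P Q : M3, |B P Q| ≤ K * ‖P‖ * ‖Q‖)
    (hWQ : ∀ ε' > 0, ∃ δ > 0, ∀ X : M3, 0 < ‖X‖ → ‖X‖ < δ → |W (1+X) - B X X| ≤ ε' * ‖X‖^2)
    (X₀ : M3) (hX₀ : X₀ ≠ 0) (g : ℝ → M3) (C : ℝ) (hC : 0 ≤ C)
    (hg : ∀ᶠ t in nhdsWithin (0:ℝ) (Set.Ioi 0), ‖g t - t • X₀‖ ≤ C * t^2) :
    Filter.Tendsto (fun t => W (1 + g t) / t^2) (nhdsWithin (0:ℝ) (Set.Ioi 0))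
      (nhds (B X₀ X₀)) := by
  rw [Metric.tendsto_nhds]
  intro ε hε
  have hN : 0 < ‖X₀‖ := norm_pos_iff.mpr hX₀
  set N := ‖X₀‖ with hNdef
  set ε₁ := ε / (2*((N+C)^2+1)) with hε₁def
  have hε₁ : 0 < ε₁ := by positivity
  obtain ⟨δ₁, hδ₁, hδ₁'⟩ := hWQ ε₁ hε₁
  set δ : ℝ := min (min 1 (N/(C+1))) (min (δ₁/(N+C+1)) (ε/(2*(2*K*N*C + K*C^2 + 1)))) with hδdef
  have hδpos : 0 < δ := by positivity
  filter_upwards [hg, Ioo_mem_nhdsGT_of_mem (Set.mem_Ico.mpr ⟨le_refl 0, hδpos⟩)]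
    with t hgt htm
  obtain ⟨ht0, htδ⟩ := htm
  have ht1 : t ≤ 1 := le_of_lt (lt_of_lt_of_le htδ ((min_le_left _ _).trans (min_le_left _ _)))
  have htN : t < N/(C+1) := lt_of_lt_of_le htδ ((min_le_left _ _).trans (min_le_right _ _))
  have htd1 : t < δ₁/(N+C+1) := lt_of_lt_of_le htδ ((min_le_right _ _).trans (min_le_left _ _))
  have htε : t < ε/(2*(2*K*N*C + K*C^2 + 1)) :=
    lt_of_lt_of_le htδ ((min_le_right _ _).trans (min_le_right _ _))
  have htN' : t*(C+1) < N := (lt_div_iff₀ (by positivity)).mp htN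
  have htd1' : t*(N+C+1) < δ₁ := (lt_div_iff₀ (by positivity)).mp htd1
  have htε' : t*(2*(2*K*N*C + K*C^2 + 1)) < ε := (lt_div_iff₀ (by positivity)).mp htε
  have ht2 : (0:ℝ) < t^2 := by positivity
  have ht2le : t^2 ≤ t := by nlinarith
  obtain ⟨r, hrdef⟩ : ∃ r : M3, r = g t - t • X₀ := ⟨_, rfl⟩
  have hr : ‖r‖ ≤ C * t^2 := by rw [hrdef]; exact hgt
  have hr0 : 0 ≤ ‖r‖ := norm_nonneg _
  have hgeq : g t = t • X₀ + r := by rw [hrdef]; abel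
  have hts : ‖t • X₀‖ = t * N := by
    rw [norm_smul, Real.norm_eq_abs, abs_of_pos ht0, hNdef]
  have hgn_up : ‖g t‖ ≤ t*N + C*t^2 := by
    rw [hgeq]
    refine (norm_add_le _ _).trans ?_
    rw [hts]; linarith
  have hgn_lo : t*N - C*t^2 ≤ ‖g t‖ := by
    have h1 : ‖t • X₀‖ ≤ ‖g t‖ + ‖r‖ := by
      calc ‖t • X₀‖ = ‖g t - r‖ := by rw [hgeq]; congr 1; abel
        _ ≤ ‖g t‖ + ‖r‖ := norm_sub_le _ _
    rw [hts] at h1; linarith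
  have hCt : C*t^2 ≤ C*t := mul_le_mul_of_nonneg_left ht2le hC
  have h0g : 0 < ‖g t‖ := by nlinarith [mul_pos ht0 ht0]
  have hgδ : ‖g t‖ < δ₁ := by nlinarith
  have hgtNC : ‖g t‖ ≤ t * (N + C) := by nlinarith
  have h1 : |W (1 + g t) - B (g t) (g t)| ≤ ε₁ * (t*(N+C))^2 := by
    refine (hδ₁' _ h0g hgδ).trans ?_
    have h2 : ‖g t‖^2 ≤ (t*(N+C))^2 := by nlinarith
    nlinarith
  have hexp : B (g t) (g t) = t^2 * B X₀ X₀ + t * B X₀ r + t * B r X₀ + B r r := by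
    rw [hgeq]
    simp only [map_add, LinearMap.add_apply, _root_.map_smul, LinearMap.smul_apply,
      smul_eq_mul]
    ring
  have e1 : |B X₀ r| ≤ K*N*(C*t^2) := by
    refine (hKb X₀ r).trans ?_
    rw [← hNdef]
    exact mul_le_mul_of_nonneg_left hr (by positivity)
  have e2 : |B r X₀| ≤ K*N*(C*t^2) := by
    refine (hKb r X₀).trans ?_
    rw [← hNdef]
    calc K * ‖r‖ * N ≤ K * (C*t^2) * N := by
          refine mul_le_mul_of_nonneg_right (mul_le_mul_of_nonneg_left hr hK) hN.le
      _ = K*N*(C*t^2) := by ring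
  have e3 : |B r r| ≤ K*(C*t^2)^2 := by
    refine (hKb r r).trans ?_
    calc K * ‖r‖ * ‖r‖ ≤ K * (C*t^2) * (C*t^2) := by
          refine mul_le_mul (mul_le_mul_of_nonneg_left hr hK) hr hr0 (by positivity)
      _ = K*(C*t^2)^2 := by ring
  have h2 : |B (g t) (g t) - t^2 * B X₀ X₀| ≤ 2*(K*N*(C*t^2))*t + K*(C*t^2)^2 := by
    rw [hexp]
    calc |t^2 * B X₀ X₀ + t * B X₀ r + t * B r X₀ + B r r - t^2 * B X₀ X₀|
        = |t * B X₀ r + t * B r X₀ + B r r| := by ring_nf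
      _ ≤ |t * B X₀ r + t * B r X₀| + |B r r| := abs_add_le _ _
      _ ≤ |t * B X₀ r| + |t * B r X₀| + |B r r| := by linarith [abs_add_le (t * B X₀ r) (t * B r X₀)]
      _ ≤ t*(K*N*(C*t^2)) + t*(K*N*(C*t^2)) + K*(C*t^2)^2 := by
          rw [abs_mul, abs_mul, abs_of_pos ht0]
          have g1 := mul_le_mul_of_nonneg_left e1 ht0.le
          have g2 := mul_le_mul_of_nonneg_left e2 ht0.le
          linarith
      _ = 2*(K*N*(C*t^2))*t + K*(C*t^2)^2 := by ring
  rw [Real.dist_eq]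
  have hdiv : W (1 + g t) / t^2 - B X₀ X₀ = (W (1 + g t) - t^2 * B X₀ X₀)/t^2 := by
    field_simp
  rw [hdiv, abs_div, abs_of_pos ht2, div_lt_iff₀ ht2]
  have htot : |W (1 + g t) - t^2 * B X₀ X₀|
      ≤ ε₁ * (t*(N+C))^2 + (2*(K*N*(C*t^2))*t + K*(C*t^2)^2) := by
    calc |W (1 + g t) - t^2 * B X₀ X₀|
        ≤ |W (1 + g t) - B (g t) (g t)| + |B (g t) (g t) - t^2 * B X₀ X₀| :=
          abs_sub_le _ _ _
      _ ≤ _ := by linarith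
  have f1 : ε₁ * (t*(N+C))^2 ≤ ε/2 * t^2 := by
    rw [hε₁def, div_mul_eq_mul_div, div_le_iff₀ (by positivity : (0:ℝ) < 2*((N+C)^2+1))]
    nlinarith [mul_pos hε ht2, sq_nonneg (N+C)]
  have ha : (2*K*N*C + K*C^2)*t < ε/2 := by nlinarith
  have hb : 2*(K*N*(C*t^2))*t + K*(C*t^2)^2 ≤ ((2*K*N*C + K*C^2)*t)*t^2 := by
    nlinarith [mul_nonneg (mul_nonneg (mul_nonneg hK (sq_nonneg C)) (pow_nonneg ht0.le 3))
      (by linarith : (0:ℝ) ≤ 1 - t)]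
  have hc2 : ((2*K*N*C + K*C^2)*t)*t^2 < (ε/2)*t^2 := mul_lt_mul_of_pos_right ha ht2
  calc |W (1 + g t) - t^2 * B X₀ X₀| ≤ _ := htot
    _ < ε * t^2 := by linarith

set_option maxHeartbeats 1600000 in
/-- if `W` is frame indifferent, coercive with constant `c` with respect
to the squared Frobenius distance to `SO(3)`, and admits a quadratic form `Q₃`
(given by a symmetric bilinear form `B`) with `|W(I + X) − Q₃(X)| ≤ ω(‖X‖)` where
`ω : [0,∞) → [0,∞]` satisfies `ω(t)/t² → 0` as `t → 0⁺`, then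
`Q₃(X) = Q₃(sym X)` and `Q₃(X) ≥ c ‖sym X‖²` for every `X`. -/
theorem stmt11 (W : Matrix (Fin 3) (Fin 3) ℝ → ℝ)
    (hframe : ∀ R ∈ SO3, ∀ F : Matrix (Fin 3) (Fin 3) ℝ, W (R * F) = W F)
    (c : ℝ) (hc : 0 < c) (hcoer : ∀ F : Matrix (Fin 3) (Fin 3) ℝ, c * distSO3 F ^ 2 ≤ W F)
    (B : Matrix (Fin 3) (Fin 3) ℝ →ₗ[ℝ] Matrix (Fin 3) (Fin 3) ℝ →ₗ[ℝ] ℝ)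
    (hBsymm : ∀ X Y, B X Y = B Y X)
    (Q₃ : Matrix (Fin 3) (Fin 3) ℝ → ℝ) (hQ₃ : ∀ X, Q₃ X = B X X)
    (ω : ℝ → ENNReal)
    (hω : Filter.Tendsto (fun t : ℝ => ω t / ENNReal.ofReal (t ^ 2))
      (nhdsWithin 0 (Set.Ioi 0)) (nhds 0))
    (hbound : ∀ X : Matrix (Fin 3) (Fin 3) ℝ,
      ENNReal.ofReal |W (1 + X) - Q₃ X| ≤ ω (frob3 X)) :
    ∀ X : Matrix (Fin 3) (Fin 3) ℝ,
      Q₃ X = Q₃ (symPart3 X) ∧ c * frob3 (symPart3 X) ^ 2 ≤ Q₃ X := by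
  obtain ⟨K, hK, hKb⟩ := bilin_bound B
  have hbound' : ∀ X : M3, ENNReal.ofReal |W (1+X) - B X X| ≤ ω ‖X‖ := by
    intro X
    have := hbound X
    rwa [hQ₃, frob3_eq_norm] at this
  have hWQ : ∀ ε' > 0, ∃ δ > 0, ∀ Y : M3, 0 < ‖Y‖ → ‖Y‖ < δ →
      |W (1+Y) - B Y Y| ≤ ε' * ‖Y‖^2 := by
    intro ε' hε'
    have h1 : ∀ᶠ u in nhdsWithin (0:ℝ) (Set.Ioi 0),
        ω u / ENNReal.ofReal (u^2) ≤ ENNReal.ofReal ε' :=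
      ENNReal.tendsto_nhds_zero.mp hω _ (ENNReal.ofReal_pos.mpr hε')
    rw [Filter.eventually_iff, mem_nhdsGT_iff_exists_Ioo_subset] at h1
    obtain ⟨δ, hδmem, hsub⟩ := h1
    refine ⟨δ, hδmem, fun Y h0 hlt => ?_⟩
    have h2 : ω ‖Y‖ / ENNReal.ofReal (‖Y‖^2) ≤ ENNReal.ofReal ε' := hsub ⟨h0, hlt⟩
    have h3 : ω ‖Y‖ ≤ ENNReal.ofReal ε' * ENNReal.ofReal (‖Y‖^2) := by
      rw [ENNReal.div_le_iff_le_mul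
        (Or.inl (ENNReal.ofReal_pos.mpr (by positivity)).ne')
        (Or.inl ENNReal.ofReal_ne_top)] at h2
      exact h2
    have h4 := le_trans (hbound' Y) h3
    rw [← ENNReal.ofReal_mul (le_of_lt hε')] at h4
    exact (ENNReal.ofReal_le_ofReal_iff (by positivity)).mp h4
  intro X
  by_cases hX0 : X = 0
  · subst hX0
    have hsym0 : symPart3 (0:M3) = 0 := by simp [symPart3]
    constructor
    · rw [hsym0]
    · rw [hsym0, hQ₃]
      simp [frob3]
  -- X ≠ 0
  obtain ⟨s, hsdef⟩ : ∃ s : M3, s = symPart3 X := ⟨_, rfl⟩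
  obtain ⟨a, hadef⟩ : ∃ a : M3, a = X - s := ⟨_, rfl⟩
  have hsT : sᵀ = s := by
    rw [hsdef]
    simp only [symPart3, Matrix.transpose_smul, Matrix.transpose_add,
      Matrix.transpose_transpose]
    rw [add_comm]
  have haT : aᵀ = -a := by
    rw [hadef, Matrix.transpose_sub, hsT, hsdef]
    simp only [symPart3]
    ext i j
    simp [Matrix.transpose_apply, Matrix.sub_apply, Matrix.add_apply, Matrix.smul_apply,
      smul_eq_mul]
    ring
  have hXas : X = a + s := by rw [hadef]; abel
  -- the straight curve
  have lim1 : Filter.Tendsto (fun t => W (1 + t • X) / t^2) (nhdsWithin (0:ℝ) (Set.Ioi 0))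
      (nhds (B X X)) := by
    refine lim_lemma W B K hK hKb hWQ X hX0 (fun t => t • X) 0 le_rfl ?_
    filter_upwards with t
    simp
  -- the rotated curve
  obtain ⟨u, hudef⟩ : ∃ u : ℝ → M3, u = fun t => ((t/2):ℝ) • a := ⟨_, rfl⟩
  have huskew : ∀ t, (u t)ᵀ = -(u t) := by
    intro t
    rw [hudef]
    simp only [Matrix.transpose_smul, haT, smul_neg]
  have hudet : ∀ t, IsUnit (1 - u t).det := by
    intro t
    have := det_one_sub_skew (huskew t)
    exact isUnit_iff_ne_zero.mpr (by linarith)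
  obtain ⟨Rt, hRtdef⟩ : ∃ Rt : ℝ → M3, Rt = fun t => (1 + u t) * (1 - u t)⁻¹ := ⟨_, rfl⟩
  have hRtSO3 : ∀ t, Rt t ∈ SO3 := by
    intro t
    rw [hRtdef]
    exact cayley_mem_SO3 (huskew t) (hudet t)
  obtain ⟨g₂, hg₂def⟩ : ∃ g₂ : ℝ → M3, g₂ = fun t => Rt t * (1 + t • s) - 1 := ⟨_, rfl⟩
  have hWg₂ : ∀ t, W (1 + g₂ t) = W (1 + t • s) := by
    intro t
    have : (1 : M3) + g₂ t = Rt t * (1 + t • s) := by rw [hg₂def]; simp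
    rw [this]
    exact hframe _ (hRtSO3 t) _
  have h32 : Real.sqrt 3 ≤ 2 := by
    nlinarith [Real.sq_sqrt (by norm_num : (0:ℝ) ≤ 3), Real.sqrt_nonneg 3]
  have hg₂bound : ∀ᶠ t in nhdsWithin (0:ℝ) (Set.Ioi 0),
      ‖g₂ t - t • X‖ ≤ (‖a‖*‖s‖ + 2*‖a‖^2*(2+‖s‖)) * t^2 := by
    have hδ2 : (0:ℝ) < min 1 (1/(‖a‖+1)) := by positivity
    filter_upwards [Ioo_mem_nhdsGT_of_mem (Set.mem_Ico.mpr ⟨le_refl 0, hδ2⟩)] with t htm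
    obtain ⟨ht0, htδ⟩ := htm
    have ht1 : t ≤ 1 := le_of_lt (lt_of_lt_of_le htδ (min_le_left _ _))
    have hta : t < 1/(‖a‖+1) := lt_of_lt_of_le htδ (min_le_right _ _)
    have hta' : t * (‖a‖+1) < 1 := (lt_div_iff₀ (by positivity)).mp hta
    have hunorm : ‖u t‖ = t/2 * ‖a‖ := by
      rw [hudef]
      simp only
      rw [norm_smul, Real.norm_eq_abs, abs_of_pos (by positivity : (0:ℝ) < t/2)]
    have hu12 : ‖u t‖ ≤ 1/2 := by
      rw [hunorm]
      nlinarith [norm_nonneg a]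
    have hinv : ‖(1 - u t)⁻¹‖ ≤ 2 * Real.sqrt 3 := inv_bound (hudet t) hu12
    have hRexp : Rt t = 1 + (2:ℝ) • (u t) + (2:ℝ) • (u t * u t * (1 - u t)⁻¹) := by
      rw [hRtdef]
      exact cayley_expand (hudet t)
    have hEt : ‖(2:ℝ) • (u t * u t * (1 - u t)⁻¹)‖ ≤ 2 * ‖a‖^2 * t^2 := by
      rw [norm_smul, Real.norm_eq_abs, abs_of_pos (by norm_num : (0:ℝ) < 2)]
      have hm1 : ‖u t * u t * (1 - u t)⁻¹‖ ≤ ‖u t‖ * ‖u t‖ * ‖(1 - u t)⁻¹‖ := by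
        calc ‖u t * u t * (1 - u t)⁻¹‖ ≤ ‖u t * u t‖ * ‖(1 - u t)⁻¹‖ :=
              Matrix.frobenius_norm_mul _ _
          _ ≤ ‖u t‖ * ‖u t‖ * ‖(1 - u t)⁻¹‖ :=
              mul_le_mul_of_nonneg_right (Matrix.frobenius_norm_mul _ _) (norm_nonneg _)
      have : ‖u t‖ * ‖u t‖ * ‖(1 - u t)⁻¹‖ ≤ (t/2*‖a‖) * (t/2*‖a‖) * (2*Real.sqrt 3) := by
        refine mul_le_mul (by rw [hunorm]) hinv (norm_nonneg _) (by positivity)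
      nlinarith [norm_nonneg a, Real.sqrt_nonneg 3, sq_nonneg t, norm_nonneg (u t),
        mul_pos ht0 ht0]
    have hgdiff : g₂ t - t • X = (t*t) • (a * s) + ((2:ℝ) • (u t * u t * (1 - u t)⁻¹)) * (1 + t • s) := by
      rw [hg₂def]
      simp only
      rw [hRexp, hXas, hudef]
      simp only
      rw [show ((2:ℝ)) • ((t/2:ℝ) • a) = t • a by rw [smul_smul]; congr 1; ring]
      rw [add_mul, add_mul, one_mul, mul_add, mul_add, mul_one, mul_one]
      rw [show (t • a) * (t • s) = (t*t) • (a*s) by rw [Matrix.smul_mul, Matrix.mul_smul, smul_smul]]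
      module
    rw [hgdiff]
    have hn1 : ‖(t*t) • (a*s)‖ ≤ t^2 * (‖a‖*‖s‖) := by
      rw [norm_smul, Real.norm_eq_abs, abs_of_pos (by positivity : (0:ℝ) < t*t)]
      have := Matrix.frobenius_norm_mul a s
      nlinarith [mul_pos ht0 ht0]
    have hn2 : ‖((2:ℝ) • (u t * u t * (1 - u t)⁻¹)) * (1 + t • s)‖
        ≤ (2*‖a‖^2*t^2) * (2 + ‖s‖) := by
      refine (Matrix.frobenius_norm_mul _ _).trans ?_
      have hb1 : ‖(1:M3) + t • s‖ ≤ 2 + ‖s‖ := by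
        refine (norm_add_le _ _).trans ?_
        rw [norm_one3, norm_smul, Real.norm_eq_abs, abs_of_pos ht0]
        nlinarith [norm_nonneg s]
      refine mul_le_mul hEt hb1 (norm_nonneg _) (by positivity)
    refine (norm_add_le _ _).trans ?_
    nlinarith [hn1, hn2]
  have lim2 : Filter.Tendsto (fun t => W (1 + t • s) / t^2) (nhdsWithin (0:ℝ) (Set.Ioi 0))
      (nhds (B X X)) := by
    have := lim_lemma W B K hK hKb hWQ X hX0 g₂ (‖a‖*‖s‖ + 2*‖a‖^2*(2+‖s‖))
      (by positivity) hg₂bound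
    refine this.congr fun t => ?_
    rw [hWg₂]
  have part1 : B X X = B s s := by
    by_cases hs0 : s = 0
    · -- s = 0 : W (1 + t•s) = W 1
      have hW1 : 0 ≤ W 1 := le_trans (mul_nonneg hc.le (sq_nonneg _)) (hcoer 1)
      have lim2' : Filter.Tendsto (fun t : ℝ => W 1 / t^2) (nhdsWithin (0:ℝ) (Set.Ioi 0))
          (nhds (B X X)) := by
        refine lim2.congr fun t => ?_
        rw [hs0]
        simp
      rcases eq_or_lt_of_le hW1 with hW1e | hW1l
      · have : Filter.Tendsto (fun t : ℝ => W 1 / t^2) (nhdsWithin (0:ℝ) (Set.Ioi 0))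
            (nhds 0) := by
          rw [← hW1e]
          simp only [zero_div]
          exact tendsto_const_nhds
        have hBXX := tendsto_nhds_unique lim2' this
        rw [hBXX, hs0]
        simp
      · exfalso
        have hsq : Filter.Tendsto (fun t : ℝ => t^2) (nhdsWithin (0:ℝ) (Set.Ioi 0))
            (nhdsWithin (0:ℝ) (Set.Ioi 0)) := by
          rw [tendsto_nhdsWithin_iff]
          constructor
          · have : Filter.Tendsto (fun t : ℝ => t^2) (nhds 0) (nhds 0) := by
              have := (continuous_pow 2).tendsto (0:ℝ)
              simpa using this
            exact this.mono_left nhdsWithin_le_nhds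
          · filter_upwards [self_mem_nhdsWithin] with t ht
            exact pow_pos (Set.mem_Ioi.mp ht) 2
        have hdiv : Filter.Tendsto (fun t : ℝ => W 1 / t^2) (nhdsWithin (0:ℝ) (Set.Ioi 0))
            Filter.atTop := by
          simp only [div_eq_mul_inv]
          exact Filter.Tendsto.const_mul_atTop hW1l (tendsto_inv_nhdsGT_zero.comp hsq)
        exact not_tendsto_nhds_of_tendsto_atTop hdiv _ lim2'
    · -- s ≠ 0
      have lim3 : Filter.Tendsto (fun t => W (1 + t • s) / t^2) (nhdsWithin (0:ℝ) (Set.Ioi 0))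
          (nhds (B s s)) := by
        refine lim_lemma W B K hK hKb hWQ s hs0 (fun t => t • s) 0 le_rfl ?_
        filter_upwards with t
        simp
      exact tendsto_nhds_unique lim2 lim3
  have part2 : c * ‖s‖^2 ≤ B s s := by
    by_cases hs0 : s = 0
    · rw [hs0]
      simp
    · have hsn : 0 < ‖s‖ := norm_pos_iff.mpr hs0
      have lim3 : Filter.Tendsto (fun t => W (1 + t • s) / t^2) (nhdsWithin (0:ℝ) (Set.Ioi 0))
          (nhds (B s s)) := by
        refine lim_lemma W B K hK hKb hWQ s hs0 (fun t => t • s) 0 le_rfl ?_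
        filter_upwards with t
        simp
      have hev : ∀ ε ∈ Set.Ioo (0:ℝ) ‖s‖, c * (‖s‖ - ε)^2 ≤ B s s := by
        rintro ε ⟨hε0, hεs⟩
        refine ge_of_tendsto lim3 ?_
        have hδ3 : (0:ℝ) < ε/(2*‖s‖^2+1) := by positivity
        filter_upwards [Ioo_mem_nhdsGT_of_mem (Set.mem_Ico.mpr ⟨le_refl 0, hδ3⟩)] with t htm
        obtain ⟨ht0, htδ⟩ := htm
        have htδ' : t * (2*‖s‖^2+1) < ε := (lt_div_iff₀ (by positivity)).mp htδ
        have hδle : 2 * t * ‖s‖^2 ≤ ε := by nlinarith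
        have hdistlb : t * (‖s‖ - ε) ≤ distSO3 (1 + t • s) := by
          rw [distSO3]
          refine le_csInf ⟨_, ⟨1, one_mem_SO3, rfl⟩⟩ ?_
          rintro b ⟨R, hR, rfl⟩
          show t * (‖s‖ - ε) ≤ frob3 ((1 + t • s) - R)
          rw [frob3_eq_norm]
          exact dist_lb hsT ht0 hε0 hδle hR
        have hd0 : 0 ≤ t * (‖s‖ - ε) := by nlinarith
        have hsq : (t * (‖s‖ - ε))^2 ≤ distSO3 (1 + t • s)^2 := by
          exact pow_le_pow_left₀ hd0 hdistlb 2
        have hcW := hcoer (1 + t • s)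
        rw [le_div_iff₀ (by positivity : (0:ℝ) < t^2)]
        calc c * (‖s‖ - ε)^2 * t^2 = c * (t * (‖s‖ - ε))^2 := by ring
          _ ≤ c * distSO3 (1 + t • s)^2 := by nlinarith
          _ ≤ W (1 + t • s) := hcW
      have hlim : Filter.Tendsto (fun ε : ℝ => c * (‖s‖ - ε)^2) (nhdsWithin (0:ℝ) (Set.Ioi 0))
          (nhds (c * ‖s‖^2)) := by
        have hcont : Continuous (fun ε : ℝ => c * (‖s‖ - ε)^2) :=
          continuous_const.mul ((continuous_const.sub continuous_id).pow 2)
        have := hcont.tendsto (0:ℝ)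
        simp only [sub_zero] at this
        exact this.mono_left nhdsWithin_le_nhds
      refine le_of_tendsto hlim ?_
      filter_upwards [Ioo_mem_nhdsGT_of_mem (Set.mem_Ico.mpr ⟨le_refl 0, hsn⟩)] with ε hε
      exact hev ε hε
  constructor
  · rw [hQ₃, hQ₃, ← hsdef, part1]
  · rw [hQ₃, ← hsdef, frob3_eq_norm]
    calc c * ‖s‖^2 ≤ B s s := part2
      _ = B X X := part1.symm
end

section
/- Let κ ≠ 0, n ≠ 0 be real numbers, let w > 0 and δ > 0, and suppose that 1 − κw x₂ > 0 and g(x₂) := (δ² + 1)(1 − κw x₂)² − 1 > 0 for every x₂ ∈ (−1/2, 1/2). Define on (−1/2,1/2) the symmetric 2×2 matrix field ĨI with entries ĨI₁₁(x₂) = δn·√(g(x₂)), ĨI₁₂(x₂) = ĨI₂₁(x₂) = δn/(1 − κw x₂), and ĨI₂₂(x₂) = δn/((1 − κw x₂)²·√(g(x₂))). Then ĨI satisfies the rescaled Gauss–Codazzi system with constant geodesic curvature κ: (i) det ĨI(x₂) = 0 for all x₂; (ii) (1 − κw x₂)·(1/w)·(d/dx₂)ĨI₁₁(x₂) = −κ·ĨI₁₁(x₂)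 − κ(1 − κw x₂)²·ĨI₂₂(x₂); (iii) (1 − κw x₂)·(1/w)·(d/dx₂)ĨI₁₂(x₂) = κ·ĨI₁₂(x₂). -/
/-- the explicit wide-ribbon ansatz for the geometry
`a = diag((1−κz₂)²,1)`, `II = diag(0,n)` satisfies the rescaled Gauss–Codazzi
system with constant geodesic curvature `κ`: zero determinant and the two
rescaled Codazzi equations. -/
theorem stmt14 (κ n w δ : ℝ) (hκ : κ ≠ 0) (hn : n ≠ 0) (hw : 0 < w) (hδ : 0 < δ)
    (hpos : ∀ x ∈ Set.Ioo (-(1/2) : ℝ) (1/2), 0 < 1 - κ * w * x)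
    (g : ℝ → ℝ) (hg : ∀ x : ℝ, g x = (δ ^ 2 + 1) * (1 - κ * w * x) ^ 2 - 1)
    (hgpos : ∀ x ∈ Set.Ioo (-(1/2) : ℝ) (1/2), 0 < g x)
    (I11 I12 I22 : ℝ → ℝ)
    (h11 : ∀ x : ℝ, I11 x = δ * n * Real.sqrt (g x))
    (h12 : ∀ x : ℝ, I12 x = δ * n / (1 - κ * w * x))
    (h22 : ∀ x : ℝ, I22 x = δ * n / ((1 - κ * w * x) ^ 2 * Real.sqrt (g x))) :
    ∀ x ∈ Set.Ioo (-(1/2) : ℝ) (1/2),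
      I11 x * I22 x - I12 x ^ 2 = 0 ∧
      (1 - κ * w * x) * ((1 / w) * deriv I11 x) =
        -κ * I11 x - κ * (1 - κ * w * x) ^ 2 * I22 x ∧
      (1 - κ * w * x) * ((1 / w) * deriv I12 x) = κ * I12 x := by
  intro x hx
  have ht : 0 < 1 - κ * w * x := hpos x hx
  have hgx : 0 < g x := hgpos x hx
  set t : ℝ := 1 - κ * w * x with htdef
  set s : ℝ := Real.sqrt (g x) with hsdef
  have hspos : 0 < s := Real.sqrt_pos.mpr hgx
  have hs2 : s ^ 2 = g x := Real.sq_sqrt hgx.le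
  have hsg : s ^ 2 = (δ ^ 2 + 1) * t ^ 2 - 1 := by rw [hs2, hg]
  -- derivative of the inner affine function
  have hp : HasDerivAt (fun y : ℝ => 1 - κ * w * y) (-(κ * w)) x := by
    simpa using ((hasDerivAt_id x).const_mul (κ * w)).const_sub 1
  -- derivative of g (as explicit formula)
  have hG : HasDerivAt (fun y : ℝ => (δ ^ 2 + 1) * (1 - κ * w * y) ^ 2 - 1)
      ((δ ^ 2 + 1) * (2 * t * (-(κ * w)))) x := by
    have := ((hp.pow 2).const_mul (δ ^ 2 + 1)).sub_const 1
    simpa [htdef, mul_comm, mul_assoc, mul_left_comm] using this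
  have hGx : ((δ ^ 2 + 1) * (1 - κ * w * x) ^ 2 - 1) ≠ 0 := by
    rw [← hg]; exact hgx.ne'
  -- derivative of I11
  have hI11eq : I11 = fun y : ℝ => δ * n *
      Real.sqrt ((δ ^ 2 + 1) * (1 - κ * w * y) ^ 2 - 1) := by
    funext y; rw [h11, hg]
  have hsqrt : HasDerivAt (fun y : ℝ =>
      Real.sqrt ((δ ^ 2 + 1) * (1 - κ * w * y) ^ 2 - 1))
      ((δ ^ 2 + 1) * (2 * t * (-(κ * w))) / (2 * s)) x := by
    have := hG.sqrt hGx
    simpa [hsdef, hg] using this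
  have hD11 : deriv I11 x = δ * n * ((δ ^ 2 + 1) * (2 * t * (-(κ * w))) / (2 * s)) := by
    rw [hI11eq]
    exact ((hsqrt.const_mul (δ * n)).deriv)
  -- derivative of I12
  have hI12eq : I12 = fun y : ℝ => δ * n / (1 - κ * w * y) := funext h12
  have hdiv : HasDerivAt (fun y : ℝ => δ * n / (1 - κ * w * y))
      ((0 * t - δ * n * (-(κ * w))) / t ^ 2) x := by
    exact (hasDerivAt_const x (δ * n)).div hp ht.ne'
  have hD12 : deriv I12 x = (0 * t - δ * n * (-(κ * w))) / t ^ 2 := by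
    rw [hI12eq]; exact hdiv.deriv
  refine ⟨?_, ?_, ?_⟩
  · rw [h11, h12, h22]
    rw [show (1 - κ * w * x) = t from rfl, ← hsdef]
    field_simp
    ring
  · rw [hD11, h11, h22, ← hsdef, ← htdef]
    field_simp
    linear_combination hsg
  · rw [hD12, h12, ← htdef]
    field_simp
    ring
end
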